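/- arXiv:2505.18712 — 5 statements merged into one kernel-verified Lean document; each statement's English description precedes it below -/
import Mathlib

section
/- There is an absolute constant C such that for every s ∈ ℂ with Im(s) ≤ 0 and every real x with 0 < x ≤ 4π, the series defining J_{2is}(x) converges absolutely and |J_{2is}(x)| ≤ C · x^{−2 Im(s)} · e^{π|Re(s)| − 2 Im(s)} · |1/2 + 2is|^{2 Im(s)}. -/
open Real Complex

/-- The Bessel function of the first kind `J_ν(x)`, for `x > 0`, defined via its power series,
where `(x/2)^w := exp (w * log (x/2))` with the real logarithm. -/
noncomputable def besselJ (ν : ℂ) (x : ℝ) : ℂ :=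
  ∑' m : ℕ, ((-1) ^ m / ((Nat.factorial m : ℂ) * Complex.Gamma (m + ν + 1))) *
    Complex.exp ((2 * m + ν) * Real.log (x / 2))


/-- `log (1+a^2) ≤ 2 a arctan a` for `a ≥ 0`. -/
lemma log_one_add_sq_le_arctan {a : ℝ} (ha : 0 ≤ a) :
    Real.log (1 + a ^ 2) ≤ 2 * a * Real.arctan a := by
  have key : MonotoneOn (fun x : ℝ => 2 * x * Real.arctan x - Real.log (1 + x ^ 2)) (Set.Ici 0) := by
    have hderiv : ∀ x : ℝ, HasDerivAt (fun x : ℝ => 2 * x * Real.arctan x - Real.log (1 + x ^ 2))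
        (2 * Real.arctan x) x := by
      intro x
      have h1 : HasDerivAt (fun x : ℝ => 2 * x) 2 x := by
        simpa using (hasDerivAt_id x).const_mul 2
      have h2 : HasDerivAt (fun x : ℝ => 2 * x * Real.arctan x)
          (2 * Real.arctan x + (2 * x) * (1 / (1 + x ^ 2))) x :=
        h1.mul (Real.hasDerivAt_arctan x)
      have h3 : HasDerivAt (fun x : ℝ => 1 + x ^ 2) (2 * x) x := by
        simpa using (hasDerivAt_pow 2 x).const_add 1
      have hne : (1 : ℝ) + x ^ 2 ≠ 0 := by positivity
      have h4 : HasDerivAt (fun x : ℝ => Real.log (1 + x ^ 2)) ((2 * x) / (1 + x ^ 2)) x :=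
        h3.log hne
      have := h2.sub h4
      refine this.congr_deriv ?_
      ring
    apply monotoneOn_of_deriv_nonneg (convex_Ici 0)
    · exact fun x _ => ((hderiv x).continuousAt).continuousWithinAt
    · exact fun x _ => ((hderiv x).differentiableAt).differentiableWithinAt
    · intro x hx
      rw [(hderiv x).deriv]
      have hx0 : (0:ℝ) ≤ x := le_of_lt (by simpa using hx)
      have : Real.arctan 0 ≤ Real.arctan x := Real.arctan_strictMono.monotone hx0
      rw [Real.arctan_zero] at this
      linarith
  have h0 : (fun x : ℝ => 2 * x * Real.arctan x - Real.log (1 + x ^ 2)) 0 = 0 := by simp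
  have := key (Set.self_mem_Ici) (Set.mem_Ici.mpr ha) ha
  rw [h0] at this
  simp only [] at this
  linarith



lemma my_arctan_nonneg {x : ℝ} (hx : 0 ≤ x) : 0 ≤ Real.arctan x := by
  simpa [Real.arctan_zero] using Real.arctan_strictMono.monotone hx


section Fsec

variable {τ : ℝ} (hτ : 0 < τ)

/-- antiderivative of `u ↦ log (1 + τ^2/u^2)` -/
noncomputable def Faux (τ u : ℝ) : ℝ :=
  u * Real.log (1 + τ ^ 2 / u ^ 2) + 2 * τ * Real.arctan (u / τ)

include hτ in
lemma Faux_hasDerivAt {u : ℝ} (hu : 0 < u) :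
    HasDerivAt (Faux τ) (Real.log (1 + τ ^ 2 / u ^ 2)) u := by
  have hu2 : u ^ 2 ≠ 0 := by positivity
  have hne : (1 : ℝ) + τ ^ 2 / u ^ 2 ≠ 0 := by positivity
  have h1 : HasDerivAt (fun u : ℝ => 1 + τ ^ 2 / u ^ 2)
      (τ ^ 2 * (-(2 * u) / (u ^ 2) ^ 2)) u := by
    have := ((hasDerivAt_pow 2 u).inv hu2).const_mul (τ ^ 2)
    simpa [div_eq_mul_inv] using this.const_add 1
  have h2 : HasDerivAt (fun u : ℝ => u * Real.log (1 + τ ^ 2 / u ^ 2))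
      (1 * Real.log (1 + τ ^ 2 / u ^ 2) +
        u * (τ ^ 2 * (-(2 * u) / (u ^ 2) ^ 2) / (1 + τ ^ 2 / u ^ 2))) u :=
    (hasDerivAt_id u).mul (h1.log hne)
  have h3 : HasDerivAt (fun u : ℝ => 2 * τ * Real.arctan (u / τ))
      (2 * τ * ((1 / (1 + (u / τ) ^ 2)) * (1 / τ))) u := by
    have hd : HasDerivAt (fun u : ℝ => u / τ) (1 / τ) u := by
      simpa [div_eq_mul_inv] using (hasDerivAt_id u).mul_const τ⁻¹
    exact ((Real.hasDerivAt_arctan (u / τ)).comp u hd).const_mul (2 * τ)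
  have := h2.add h3
  refine this.congr_deriv ?_
  have hτ2 : τ ≠ 0 := ne_of_gt hτ
  have hu' : u ≠ 0 := ne_of_gt hu
  field_simp
  ring

include hτ in
lemma Faux_le_pi_mul (u : ℝ) (hu : 0 < u) : Faux τ u ≤ π * τ := by
  have key := log_one_add_sq_le_arctan (a := τ / u) (by positivity)
  have h2 : Real.arctan (τ / u) = π / 2 - Real.arctan (u / τ) := by
    rw [show τ / u = (u / τ)⁻¹ by rw [inv_div], Real.arctan_inv_of_pos (by positivity)]
  have h3 : u * Real.log (1 + τ ^ 2 / u ^ 2) ≤ 2 * τ * (π / 2 - Real.arctan (u / τ)) := by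
    have : τ ^ 2 / u ^ 2 = (τ / u) ^ 2 := by rw [div_pow]
    rw [this]
    calc u * Real.log (1 + (τ / u) ^ 2) ≤ u * (2 * (τ / u) * Real.arctan (τ / u)) := by
          apply mul_le_mul_of_nonneg_left key hu.le
      _ = 2 * τ * (π / 2 - Real.arctan (u / τ)) := by rw [h2]; field_simp
  have : Faux τ u ≤ 2 * τ * (π / 2 - Real.arctan (u / τ)) + 2 * τ * Real.arctan (u / τ) := by
    unfold Faux; linarith
  calc Faux τ u ≤ _ := this
    _ = π * τ := by ring

include hτ in
lemma log_sq_antitone {a b : ℝ} (ha : 0 < a) (hab : a ≤ b) :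
    Real.log (1 + τ ^ 2 / b ^ 2) ≤ Real.log (1 + τ ^ 2 / a ^ 2) := by
  have hb : 0 < b := lt_of_lt_of_le ha hab
  apply Real.log_le_log (by positivity)
  have : τ ^ 2 / b ^ 2 ≤ τ ^ 2 / a ^ 2 :=
    div_le_div_of_nonneg_left (by positivity) (by positivity) (by nlinarith)
  linarith

include hτ in
lemma Faux_step {u : ℝ} (hu : 0 < u) :
    Real.log (1 + τ ^ 2 / (u + 1) ^ 2) ≤ Faux τ (u + 1) - Faux τ u := by
  obtain ⟨c, hc, hceq⟩ := exists_hasDerivAt_eq_slope (Faux τ)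
      (fun v => Real.log (1 + τ ^ 2 / v ^ 2)) (by linarith : u < u + 1)
      (fun v hv => (Faux_hasDerivAt (τ := τ) hτ
        (lt_of_lt_of_le hu hv.1)).continuousAt.continuousWithinAt)
      (fun v hv => Faux_hasDerivAt (τ := τ) hτ (lt_trans hu hv.1))
  rw [add_sub_cancel_left, div_one] at hceq
  rw [← hceq]
  exact log_sq_antitone hτ (lt_trans hu hc.1) hc.2.le

/-- The main sum estimate. -/
lemma sum_log_bound (p τ : ℝ) (hp : 1 ≤ p) (n : ℕ) :
    ∑ j ∈ Finset.range (n + 1), Real.log (1 + τ ^ 2 / (p + j) ^ 2) ≤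
      π * |τ| - (p - 1) * Real.log (1 + τ ^ 2 / p ^ 2) := by
  have hp0 : 0 < p := lt_of_lt_of_le one_pos hp
  rcases eq_or_ne τ 0 with h0 | h0
  · simp [h0]
  · -- replace τ by |τ|
    have hτ : 0 < |τ| := abs_pos.mpr h0
    have hsq : τ ^ 2 = |τ| ^ 2 := (_root_.sq_abs τ).symm
    rw [hsq]
    set t := |τ| with ht
    have htail : ∑ j ∈ Finset.range n, Real.log (1 + t ^ 2 / (p + (j + 1)) ^ 2) ≤
        Faux t (p + n) - Faux t p := by
      have step : ∀ j ∈ Finset.range n,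
          Real.log (1 + t ^ 2 / (p + (j + 1)) ^ 2) ≤ Faux t (p + (j + 1)) - Faux t (p + j) := by
        intro j _
        have := Faux_step (τ := t) hτ (u := p + j) (by positivity)
        convert this using 3 <;> push_cast <;> ring
      calc ∑ j ∈ Finset.range n, Real.log (1 + t ^ 2 / (p + (j + 1)) ^ 2)
          ≤ ∑ j ∈ Finset.range n, (Faux t (p + (j + 1)) - Faux t (p + j)) :=
            Finset.sum_le_sum step
        _ = Faux t (p + n) - Faux t (p + 0) := by
            have := Finset.sum_range_sub (fun i : ℕ => Faux t (p + i)) n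
            simpa using this
        _ = Faux t (p + n) - Faux t p := by norm_num
    have hFn : Faux t (p + n) ≤ π * t := Faux_le_pi_mul hτ _ (by positivity)
    have hFp : p * Real.log (1 + t ^ 2 / p ^ 2) ≤ Faux t p := by
      unfold Faux
      have := my_arctan_nonneg (x := p / t) (by positivity)
      nlinarith
    have hsplit : ∑ j ∈ Finset.range (n + 1), Real.log (1 + t ^ 2 / (p + j) ^ 2) =
        Real.log (1 + t ^ 2 / p ^ 2) +
          ∑ j ∈ Finset.range n, Real.log (1 + t ^ 2 / (p + (j + 1)) ^ 2) := by
      rw [Finset.sum_range_succ']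
      norm_num [add_comm]
    rw [hsplit]
    have : Real.log (1 + t ^ 2 / p ^ 2) + (Faux t (p + n) - Faux t p) ≤
        π * t - (p - 1) * Real.log (1 + t ^ 2 / p ^ 2) := by linarith
    linarith

end Fsec



/-- Lower bound for `‖Γ(z)‖` when `Re z ≥ 1`. -/
lemma gamma_norm_lower (z : ℂ) (hz : 1 ≤ z.re) :
    Real.Gamma z.re *
      Real.exp (-(π * |z.im| / 2) + (z.re - 1) / 2 * Real.log (1 + z.im ^ 2 / z.re ^ 2)) ≤
      ‖Complex.Gamma z‖ := by
  set p := z.re with hp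
  set τ := z.im with hτ
  have hp0 : 0 < p := lt_of_lt_of_le one_pos hz
  set B : ℝ := Real.exp (-(π * |τ| / 2) + (p - 1) / 2 * Real.log (1 + τ ^ 2 / p ^ 2)) with hB
  -- per-n estimate
  have key : ∀ n : ℕ, 1 ≤ n → Real.GammaSeq p n * B ≤ ‖Complex.GammaSeq z n‖ := by
    intro n hn
    have hn0 : (0 : ℝ) < n := by exact_mod_cast hn
    -- denominators
    have hden_pos : ∀ j : ℕ, (0 : ℝ) < p + j := fun j => by positivity
    have prod_pos : (0 : ℝ) < ∏ j ∈ Finset.range (n + 1), (p + j) :=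
      Finset.prod_pos fun j _ => hden_pos j
    -- norm of the complex denominator product
    have hnormsq : ∀ j : ℕ, ‖z + (j : ℂ)‖ ^ 2 = (p + j) ^ 2 * (1 + τ ^ 2 / (p + j) ^ 2) := by
      intro j
      rw [Complex.sq_norm, Complex.normSq_apply]
      have : (z + (j : ℂ)).re = p + j := by simp [hp]
      have him : (z + (j : ℂ)).im = τ := by simp [hτ]
      rw [this, him]
      field_simp
    have prodsq : (∏ j ∈ Finset.range (n + 1), ‖z + (j : ℂ)‖) ^ 2 =
        (∏ j ∈ Finset.range (n + 1), (p + j)) ^ 2 *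
          ∏ j ∈ Finset.range (n + 1), (1 + τ ^ 2 / (p + j) ^ 2) := by
      rw [← Finset.prod_pow, ← Finset.prod_pow, ← Finset.prod_mul_distrib]
      exact Finset.prod_congr rfl fun j _ => hnormsq j
    have hQ : ∏ j ∈ Finset.range (n + 1), (1 + τ ^ 2 / (p + j) ^ 2) ≤ (1 / B) ^ 2 := by
      have hexp : ∏ j ∈ Finset.range (n + 1), (1 + τ ^ 2 / (p + j) ^ 2) =
          Real.exp (∑ j ∈ Finset.range (n + 1), Real.log (1 + τ ^ 2 / (p + j) ^ 2)) := by
        rw [Real.exp_sum]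
        exact (Finset.prod_congr rfl fun j _ => (Real.exp_log (by positivity)).symm)
      rw [hexp, hB]
      rw [one_div, ← Real.exp_neg, ← Real.exp_nat_mul]
      apply Real.exp_le_exp.mpr
      have := sum_log_bound p τ hz n
      push_cast
      linarith
    have hprod_le : ∏ j ∈ Finset.range (n + 1), ‖z + (j : ℂ)‖ ≤
        (∏ j ∈ Finset.range (n + 1), (p + j)) * (1 / B) := by
      have hBpos : 0 < B := Real.exp_pos _
      have hle : (∏ j ∈ Finset.range (n + 1), ‖z + (j : ℂ)‖) ^ 2 ≤
          ((∏ j ∈ Finset.range (n + 1), (p + j)) * (1 / B)) ^ 2 := by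
        rw [prodsq, mul_pow]
        apply mul_le_mul_of_nonneg_left hQ (by positivity)
      have h1 : (0 : ℝ) ≤ ∏ j ∈ Finset.range (n + 1), ‖z + (j : ℂ)‖ :=
        Finset.prod_nonneg fun j _ => norm_nonneg _
      have h2 : (0 : ℝ) ≤ (∏ j ∈ Finset.range (n + 1), (p + j)) * (1 / B) := by positivity
      nlinarith
    -- now compute both GammaSeq values
    have hnum : ‖((n : ℂ) ^ z * (n.factorial : ℂ))‖ = (n : ℝ) ^ p * n.factorial := by
      rw [norm_mul]
      have : ‖(n : ℂ) ^ z‖ = (n : ℝ) ^ p := by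
        rw [show ((n : ℂ)) = (((n : ℝ) : ℂ)) by push_cast; rfl]
        rw [Complex.norm_cpow_eq_rpow_re_of_pos hn0]
      rw [this]
      simp
    have hgs : ‖Complex.GammaSeq z n‖ =
        ((n : ℝ) ^ p * n.factorial) / ∏ j ∈ Finset.range (n + 1), ‖z + (j : ℂ)‖ := by
      rw [Complex.GammaSeq, norm_div, hnum, norm_prod]
    have hrs : Real.GammaSeq p n = ((n : ℝ) ^ p * n.factorial) / ∏ j ∈ Finset.range (n + 1), (p + j) :=
      rfl
    rw [hgs, hrs]
    rw [div_mul_eq_mul_div]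
    have hnum_nonneg : (0 : ℝ) ≤ (n : ℝ) ^ p * n.factorial := by positivity
    have hprod_norm_pos : (0 : ℝ) < ∏ j ∈ Finset.range (n + 1), ‖z + (j : ℂ)‖ := by
      apply Finset.prod_pos
      intro j _
      have : (z + (j : ℂ)).re = p + j := by simp [hp]
      have h' : 0 < (z + (j : ℂ)).re := by rw [this]; positivity
      calc (0:ℝ) < (z + (j : ℂ)).re := h'
        _ ≤ |(z + (j : ℂ)).re| := le_abs_self _
        _ ≤ ‖z + (j : ℂ)‖ := Complex.abs_re_le_norm _
    rw [div_le_div_iff₀ (by positivity) hprod_norm_pos]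
    have hBpos : 0 < B := Real.exp_pos _
    calc (n : ℝ) ^ p * ↑n.factorial * B * (∏ j ∈ Finset.range (n + 1), ‖z + (j : ℂ)‖)
        ≤ (n : ℝ) ^ p * ↑n.factorial * B * ((∏ j ∈ Finset.range (n + 1), (p + j)) * (1 / B)) := by
          apply mul_le_mul_of_nonneg_left hprod_le (by positivity)
      _ = (n : ℝ) ^ p * ↑n.factorial * (∏ j ∈ Finset.range (n + 1), (p + j)) := by
          field_simp
  -- pass to the limit
  have h1 : Filter.Tendsto (fun n => ‖Complex.GammaSeq z n‖) Filter.atTop (nhds ‖Complex.Gamma z‖) :=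
    (Complex.GammaSeq_tendsto_Gamma z).norm
  have h2 : Filter.Tendsto (fun n => Real.GammaSeq p n * B) Filter.atTop
      (nhds (Real.Gamma p * B)) :=
    (Real.GammaSeq_tendsto_Gamma p).mul_const B
  exact le_of_tendsto_of_tendsto h2 h1 (Filter.eventually_atTop.mpr ⟨1, key⟩)


lemma gamma_base {σ : ℝ} (h0 : 0 ≤ σ) (h1 : σ ≤ 1) : (0.39 : ℝ) ≤ Real.Gamma (1 + σ) := by
  have hsqrtpi : Real.sqrt π ≤ 1.78 := by
    rw [show (1.78 : ℝ) = Real.sqrt (1.78 ^ 2) by rw [Real.sqrt_sq (by norm_num)]]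
    apply Real.sqrt_le_sqrt
    nlinarith [Real.pi_lt_d2]
  have hΓ2 : Real.Gamma 2 = 1 := by
    have := Real.Gamma_nat_eq_factorial 1
    norm_num at this
    convert this using 2
    norm_num
  have hΓ3 : Real.Gamma 3 = 2 := by
    have := Real.Gamma_nat_eq_factorial 2
    norm_num at this
    convert this using 2
    norm_num
  rcases eq_or_lt_of_le h0 with h | h
  · rw [← h]; norm_num [Real.Gamma_one]
  rcases eq_or_lt_of_le h1 with h' | h'
  · rw [h']; norm_num [hΓ2]
  by_cases hc : 0.39 ≤ σ
  · have := Real.convexOn_Gamma.slope_mono_adjacent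
      (show (1 + σ : ℝ) ∈ Set.Ioi (0:ℝ) by simp; linarith)
      (show (3 : ℝ) ∈ Set.Ioi (0:ℝ) by norm_num)
      (show (1 + σ : ℝ) < 2 by linarith) (show (2:ℝ) < 3 by norm_num)
    rw [hΓ2, hΓ3] at this
    have h2 : (1 - Real.Gamma (1 + σ)) / (2 - (1 + σ)) ≤ 1 := by
      calc (1 - Real.Gamma (1 + σ)) / (2 - (1 + σ)) ≤ (2 - 1) / (3 - 2) := this
        _ = 1 := by norm_num
    have hd : (0:ℝ) < 2 - (1 + σ) := by linarith
    rw [div_le_one hd] at h2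
    linarith
  · push_neg at hc
    have key := Real.convexOn_Gamma.slope_mono_adjacent
      (show (1/2 : ℝ) ∈ Set.Ioi (0:ℝ) by norm_num)
      (show (1 + σ : ℝ) ∈ Set.Ioi (0:ℝ) by simp; linarith)
      (show (1/2 : ℝ) < 1 by norm_num) (show (1:ℝ) < 1 + σ by linarith)
    rw [Real.Gamma_one, Real.Gamma_one_half_eq] at key
    have h2 : (1 - Real.sqrt π) / (1 - 1/2) ≤ (Real.Gamma (1 + σ) - 1) / σ := by
      rw [show (1:ℝ) + σ - 1 = σ by ring] at key
      exact key
    rw [div_le_div_iff₀ (by norm_num) h] at h2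
    nlinarith

lemma gamma_lower_aux : ∀ n : ℕ, ∀ σ : ℝ, 0 ≤ σ → σ ≤ n + 1 →
    0.39 * ((1 + σ) / (2 * Real.exp 1)) ^ σ ≤ Real.Gamma (1 + σ) := by
  intro n
  induction n with
  | zero =>
    intro σ h0 h1
    norm_num at h1
    have hbase : ((1 + σ) / (2 * Real.exp 1)) ^ σ ≤ 1 := by
      apply Real.rpow_le_one (by positivity) _ h0
      rw [div_le_one (by positivity)]
      nlinarith [Real.exp_one_gt_d9]
    calc (0.39 : ℝ) * ((1 + σ) / (2 * Real.exp 1)) ^ σ ≤ 0.39 * 1 := by nlinarith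
      _ ≤ Real.Gamma (1 + σ) := by have := gamma_base h0 h1; norm_num at this ⊢; linarith
  | succ n ih =>
    intro σ h0 h1
    by_cases hle : σ ≤ n + 1
    · exact ih σ h0 hle
    push_neg at hle
    have hσ1 : 1 < σ := by
      have : (0:ℝ) ≤ (n:ℝ) := Nat.cast_nonneg n
      linarith
    have hσ0 : 0 < σ := by linarith
    set c : ℝ := 2 * Real.exp 1 with hc
    have hcpos : 0 < c := by positivity
    have ih' := ih (σ - 1) (by linarith) (by push_cast; push_cast at h1; linarith)
    rw [show 1 + (σ - 1) = σ by ring] at ih'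
    have hΓ : Real.Gamma (1 + σ) = σ * Real.Gamma σ := by
      rw [add_comm, Real.Gamma_add_one (ne_of_gt hσ0)]
    have step1 : 0.39 * σ * (σ / c) ^ (σ - 1) ≤ Real.Gamma (1 + σ) := by
      rw [hΓ]
      calc 0.39 * σ * (σ / c) ^ (σ - 1) = σ * (0.39 * (σ / c) ^ (σ - 1)) := by ring
        _ ≤ σ * Real.Gamma σ := by
            apply mul_le_mul_of_nonneg_left ih' hσ0.le
    have key : ((1 + σ) / c) ^ σ ≤ σ * (σ / c) ^ (σ - 1) := by
      have h1' : (σ / c) ^ (σ - 1) = (σ / c) ^ σ / (σ / c) := by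
        rw [Real.rpow_sub (by positivity), Real.rpow_one]
      rw [h1']
      have hexp : (1 + 1/σ) ^ σ ≤ c := by
        rw [Real.rpow_def_of_pos (by positivity)]
        have hlog : Real.log (1 + 1/σ) ≤ 1/σ := by
          have := Real.log_le_sub_one_of_pos (show (0:ℝ) < 1 + 1/σ by positivity)
          linarith
        have : Real.log (1 + 1/σ) * σ ≤ 1 := by
          rw [mul_comm]
          calc σ * Real.log (1 + 1/σ) ≤ σ * (1/σ) := by
                apply mul_le_mul_of_nonneg_left hlog hσ0.le
            _ = 1 := by field_simp
        calc Real.exp (Real.log (1 + 1/σ) * σ) ≤ Real.exp 1 := Real.exp_le_exp.mpr this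
          _ ≤ c := by rw [hc]; nlinarith [Real.exp_pos (1:ℝ)]
      have hmul : (1 + σ) ^ σ ≤ c * σ ^ σ := by
        have h1σ : (1 + σ) = σ * (1 + 1/σ) := by field_simp; ring
        rw [h1σ, Real.mul_rpow hσ0.le (by positivity)]
        calc σ ^ σ * (1 + 1/σ) ^ σ ≤ σ ^ σ * c := by
              apply mul_le_mul_of_nonneg_left hexp (by positivity)
          _ = c * σ ^ σ := by ring
      rw [Real.div_rpow (by positivity : (0:ℝ) ≤ 1 + σ) hcpos.le,
        Real.div_rpow hσ0.le hcpos.le]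
      have hcσ : (0:ℝ) < c ^ σ := Real.rpow_pos_of_pos hcpos σ
      have hσσ : (0:ℝ) < σ ^ σ := Real.rpow_pos_of_pos hσ0 σ
      have hR : σ * (σ ^ σ / c ^ σ / (σ / c)) = c * σ ^ σ / c ^ σ := by
        field_simp
      rw [hR]
      exact div_le_div_of_nonneg_right hmul hcσ.le
    calc 0.39 * ((1 + σ) / c) ^ σ ≤ 0.39 * (σ * (σ / c) ^ (σ - 1)) := by
          apply mul_le_mul_of_nonneg_left key (by norm_num)
      _ = 0.39 * σ * (σ / c) ^ (σ - 1) := by ring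
      _ ≤ Real.Gamma (1 + σ) := step1


lemma gamma_factorial_lower (ν : ℂ) (hν : 0 ≤ ν.re) :
    ∀ m : ℕ, (m.factorial : ℝ) * ‖Complex.Gamma (ν + 1)‖ ≤ ‖Complex.Gamma (ν + 1 + m)‖ := by
  intro m
  induction m with
  | zero => simp
  | succ m ih =>
    have hre : (ν + 1 + (m : ℂ)).re = ν.re + 1 + m := by simp
    have hrepos : 0 < (ν + 1 + (m : ℂ)).re := by rw [hre]; positivity
    have hne : (ν + 1 + (m : ℂ)) ≠ 0 := by
      intro h
      rw [h] at hrepos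
      simp at hrepos
    have heq : (ν + 1 + ((m + 1 : ℕ) : ℂ)) = (ν + 1 + (m : ℂ)) + 1 := by push_cast; ring
    rw [heq, Complex.Gamma_add_one _ hne, norm_mul]
    have hnorm : (m + 1 : ℝ) ≤ ‖ν + 1 + (m : ℂ)‖ := by
      have h0 : (m + 1 : ℝ) ≤ (ν + 1 + (m : ℂ)).re := by rw [hre]; linarith
      calc (m + 1 : ℝ) ≤ (ν + 1 + (m : ℂ)).re := h0
        _ ≤ |(ν + 1 + (m : ℂ)).re| := le_abs_self _
        _ ≤ ‖ν + 1 + (m : ℂ)‖ := Complex.abs_re_le_norm _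
    calc ((m + 1).factorial : ℝ) * ‖Complex.Gamma (ν + 1)‖
        = (m + 1 : ℝ) * ((m.factorial : ℝ) * ‖Complex.Gamma (ν + 1)‖) := by
          push_cast [Nat.factorial_succ]; ring
      _ ≤ (m + 1 : ℝ) * ‖Complex.Gamma (ν + 1 + m)‖ := by
          apply mul_le_mul_of_nonneg_left ih (by positivity)
      _ ≤ ‖ν + 1 + (m : ℂ)‖ * ‖Complex.Gamma (ν + 1 + m)‖ := by
          apply mul_le_mul_of_nonneg_right hnorm (norm_nonneg _)

set_option maxHeartbeats 1000000 in
/-- For `Im s ≤ 0` and `0 < x ≤ 4π`, the series defining `J_{2is}(x)` converges absolutely and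
`|J_{2is}(x)| ≤ C x^{-2 Im s} e^{π |Re s| - 2 Im s} |1/2 + 2is|^{2 Im s}`. -/
theorem besselJ_bound_lower_half_plane :
    ∃ C : ℝ, ∀ s : ℂ, s.im ≤ 0 → ∀ x : ℝ, 0 < x → x ≤ 4 * π →
      Summable (fun m : ℕ =>
        ‖((-1) ^ m / ((Nat.factorial m : ℂ) * Complex.Gamma (m + 2 * Complex.I * s + 1))) *
          Complex.exp ((2 * m + 2 * Complex.I * s) * Real.log (x / 2))‖) ∧
      ‖besselJ (2 * Complex.I * s) x‖ ≤
        C * x ^ (-2 * s.im) * Real.exp (π * |s.re| - 2 * s.im) *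
          ‖(1 / 2 : ℂ) + 2 * Complex.I * s‖ ^ (2 * s.im) := by
  refine ⟨Real.exp (4 * π ^ 2) / 0.39, fun s hs x hx hx4 => ?_⟩
  set ν : ℂ := 2 * Complex.I * s with hν
  set σ : ℝ := -2 * s.im with hσdef
  have hσ0 : 0 ≤ σ := by rw [hσdef]; linarith
  have hνre : ν.re = σ := by
    simp [hν, hσdef, Complex.mul_re, Complex.mul_im]
  have hνim : ν.im = 2 * s.re := by
    simp [hν, Complex.mul_re, Complex.mul_im]
  set L : ℝ := Real.log (x / 2) with hL
  have hx2 : (0 : ℝ) < x / 2 := by linarith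
  have hpi := Real.pi_pos
  -- norms of terms
  set T : ℕ → ℂ := fun m =>
    ((-1) ^ m / ((Nat.factorial m : ℂ) * Complex.Gamma (m + ν + 1))) *
      Complex.exp ((2 * m + ν) * (L : ℂ)) with hT
  have hterm : ∀ m : ℕ, ‖T m‖ =
      Real.exp ((2 * m + σ) * L) / ((m.factorial : ℝ) * ‖Complex.Gamma ((m : ℂ) + ν + 1)‖) := by
    intro m
    rw [hT]
    rw [norm_mul, norm_div, norm_pow, norm_neg, norm_one, one_pow, norm_mul]
    have h1 : ‖((m.factorial : ℕ) : ℂ)‖ = (m.factorial : ℝ) := by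
      rw [Complex.norm_natCast]
    have h2 : ‖Complex.exp ((2 * m + ν) * (L : ℂ))‖ = Real.exp ((2 * m + σ) * L) := by
      rw [Complex.norm_exp]
      congr 1
      simp [Complex.mul_re, Complex.add_re, Complex.add_im, hνre]
    rw [h1, h2]
    ring
  -- lower bound for Gamma (ν + 1)
  set z : ℂ := ν + 1 with hz
  have hzre : z.re = 1 + σ := by simp [hz, hνre]; ring
  have hzim : z.im = ν.im := by simp [hz]
  have hzre1 : 1 ≤ z.re := by rw [hzre]; linarith
  set R : ℝ := ‖z‖ with hR
  have hzne : z ≠ 0 := by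
    intro h
    rw [h] at hzre
    simp at hzre
    linarith
  have hRpos : 0 < R := by rw [hR]; exact norm_pos_iff.mpr hzne
  have hR2 : R ^ 2 = z.re ^ 2 + z.im ^ 2 := by
    rw [hR, Complex.sq_norm, Complex.normSq_apply]
    ring
  have hppos : (0 : ℝ) < 1 + σ := by linarith
  have hepos : (0 : ℝ) < 2 * Real.exp 1 := by positivity
  -- key: combine the two gamma lower bounds
  have hgam : 0.39 * Real.exp (σ * Real.log (R / (2 * Real.exp 1)) - π * |s.re|) ≤
      ‖Complex.Gamma z‖ := by
    have h1 := gamma_norm_lower z hzre1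
    have h2 := gamma_lower_aux ⌈σ⌉₊ σ hσ0
      ((Nat.le_ceil σ).trans (by simp))
    have h3 : ((1 + σ) / (2 * Real.exp 1)) ^ σ =
        Real.exp (σ * Real.log ((1 + σ) / (2 * Real.exp 1))) := by
      rw [Real.rpow_def_of_pos (by positivity)]
      ring_nf
    -- log identity
    have hlogR : Real.log (1 + z.im ^ 2 / z.re ^ 2) = 2 * Real.log R - 2 * Real.log z.re := by
      have hq : 1 + z.im ^ 2 / z.re ^ 2 = R ^ 2 / z.re ^ 2 := by
        rw [hR2]; field_simp
      rw [hq, Real.log_div (by positivity) (by positivity)]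
      rw [Real.log_pow, Real.log_pow]
      push_cast
      ring
    have hexps : σ * Real.log ((1 + σ) / (2 * Real.exp 1)) +
        (-(π * |z.im| / 2) + (z.re - 1) / 2 * Real.log (1 + z.im ^ 2 / z.re ^ 2)) =
        σ * Real.log (R / (2 * Real.exp 1)) - π * |s.re| := by
      have e1 : Real.log ((1 + σ) / (2 * Real.exp 1)) =
          Real.log (1 + σ) - Real.log (2 * Real.exp 1) := Real.log_div (by positivity) (by positivity)
      have e2 : Real.log (R / (2 * Real.exp 1)) =
          Real.log R - Real.log (2 * Real.exp 1) := Real.log_div (by positivity) (by positivity)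
      have e3 : |z.im| = 2 * |s.re| := by
        rw [hzim, hνim, abs_mul]
        norm_num
      have e4 : Real.log z.re = Real.log (1 + σ) := by rw [hzre]
      rw [e1, e2, e3, hlogR, e4, hzre]
      ring
    calc 0.39 * Real.exp (σ * Real.log (R / (2 * Real.exp 1)) - π * |s.re|)
        = (0.39 * Real.exp (σ * Real.log ((1 + σ) / (2 * Real.exp 1)))) *
            Real.exp (-(π * |z.im| / 2) + (z.re - 1) / 2 * Real.log (1 + z.im ^ 2 / z.re ^ 2)) := by
          rw [← hexps, Real.exp_add]
          ring
      _ ≤ Real.Gamma z.re *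
            Real.exp (-(π * |z.im| / 2) + (z.re - 1) / 2 * Real.log (1 + z.im ^ 2 / z.re ^ 2)) := by
          apply mul_le_mul_of_nonneg_right _ (Real.exp_pos _).le
          rw [hzre, ← h3]
          exact h2
      _ ≤ ‖Complex.Gamma z‖ := h1
  have hΓpos : 0 < ‖Complex.Gamma z‖ := lt_of_lt_of_le (by positivity) hgam
  -- term bound
  set K : ℝ := Real.exp (σ * L) / ‖Complex.Gamma z‖ with hK
  have hKpos : 0 < K := by rw [hK]; positivity
  have hbound : ∀ m : ℕ, ‖T m‖ ≤ K * ((4 * π ^ 2) ^ m / m.factorial) := by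
    intro m
    rw [hterm m]
    have hfacpos : (0 : ℝ) < m.factorial := by positivity
    have hfac1 : (1 : ℝ) ≤ m.factorial := by exact_mod_cast Nat.one_le_iff_ne_zero.mpr m.factorial_ne_zero
    have hfac := gamma_factorial_lower ν (by rw [hνre]; exact hσ0) m
    have harg : ((m : ℂ) + ν + 1) = ν + 1 + m := by ring
    rw [harg]
    have hnum : Real.exp ((2 * m + σ) * L) ≤ Real.exp (σ * L) * (4 * π ^ 2) ^ m := by
      have e1 : Real.exp ((2 * m + σ) * L) = Real.exp (σ * L) * Real.exp ((2 * m : ℕ) * L) := by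
        rw [← Real.exp_add]
        congr 1
        push_cast
        ring
      rw [e1, Real.exp_nat_mul, Real.exp_log hx2]
      apply mul_le_mul_of_nonneg_left _ (Real.exp_pos _).le
      have : (x / 2) ^ (2 * m) = ((x / 2) ^ 2) ^ m := by rw [← pow_mul]
      rw [this]
      apply pow_le_pow_left₀ (by positivity)
      nlinarith
    have hden : ‖Complex.Gamma z‖ * m.factorial ≤ (m.factorial : ℝ) * ‖Complex.Gamma (ν + 1 + m)‖ := by
      calc ‖Complex.Gamma z‖ * m.factorial = (m.factorial : ℝ) * ‖Complex.Gamma (ν + 1)‖ := by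
            rw [hz]; ring
        _ ≤ ‖Complex.Gamma (ν + 1 + m)‖ := hfac
        _ ≤ (m.factorial : ℝ) * ‖Complex.Gamma (ν + 1 + m)‖ := by
            apply le_mul_of_one_le_left (norm_nonneg _) hfac1
    have hrhs : K * ((4 * π ^ 2) ^ m / m.factorial) =
        (Real.exp (σ * L) * (4 * π ^ 2) ^ m) / (‖Complex.Gamma z‖ * m.factorial) := by
      rw [hK]
      field_simp
    rw [hrhs]
    apply div_le_div₀ (by positivity) hnum (by positivity) hden
  -- summability
  have hsumg : Summable (fun m : ℕ => K * ((4 * π ^ 2) ^ m / m.factorial)) :=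
    (Real.summable_pow_div_factorial (4 * π ^ 2)).mul_left K
  have hsummable : Summable (fun m : ℕ => ‖T m‖) :=
    Summable.of_nonneg_of_le (fun m => norm_nonneg _) hbound hsumg
  refine ⟨hsummable, ?_⟩
  -- tsum bound
  have htsum : ‖besselJ ν x‖ ≤ K * Real.exp (4 * π ^ 2) := by
    have h1 : ‖besselJ ν x‖ ≤ ∑' m, ‖T m‖ := by
      rw [besselJ]
      exact norm_tsum_le_tsum_norm hsummable
    have h2 : ∑' m, ‖T m‖ ≤ ∑' m : ℕ, K * ((4 * π ^ 2) ^ m / m.factorial) :=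
      Summable.tsum_le_tsum hbound hsummable hsumg
    have h3 : ∑' m : ℕ, K * ((4 * π ^ 2) ^ m / m.factorial) =
        K * ∑' m : ℕ, ((4 * π ^ 2) ^ m / m.factorial) := tsum_mul_left
    have h4 : ∑' m : ℕ, ((4 * π ^ 2) ^ m / (m.factorial : ℝ)) ≤ Real.exp (4 * π ^ 2) := by
      apply tsum_le_of_sum_range_le (fun n => by positivity)
      intro n
      exact Real.sum_le_exp_of_nonneg (by positivity) n
    calc ‖besselJ ν x‖ ≤ ∑' m, ‖T m‖ := h1
      _ ≤ K * ∑' m : ℕ, ((4 * π ^ 2) ^ m / m.factorial) := by rw [← h3]; exact h2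
      _ ≤ K * Real.exp (4 * π ^ 2) := by
          apply mul_le_mul_of_nonneg_left h4 hKpos.le
  -- final assembly
  set W : ℝ := ‖(1 / 2 : ℂ) + ν‖ with hW
  have hWpos : 0 < W := by
    rw [hW]
    apply norm_pos_iff.mpr
    intro h
    have : ((1 / 2 : ℂ) + ν).re = 1 / 2 + σ := by simp [hνre]
    rw [h] at this
    simp at this
    linarith
  have hWR : W ≤ R := by
    have hW2 : W ^ 2 = (1 / 2 + σ) ^ 2 + ν.im ^ 2 := by
      rw [hW, Complex.sq_norm, Complex.normSq_apply]
      have h1 : ((1 / 2 : ℂ) + ν).re = 1 / 2 + σ := by simp [hνre]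
      have h2 : ((1 / 2 : ℂ) + ν).im = ν.im := by simp
      rw [h1, h2]
      ring
    have : W ^ 2 ≤ R ^ 2 := by
      rw [hW2, hR2, hzre, hzim]
      nlinarith
    calc W = Real.sqrt (W ^ 2) := by rw [Real.sqrt_sq hWpos.le]
      _ ≤ Real.sqrt (R ^ 2) := Real.sqrt_le_sqrt this
      _ = R := by rw [Real.sqrt_sq hRpos.le]
  -- rewrite RHS
  have hrhseq : x ^ (-2 * s.im) * Real.exp (π * |s.re| - 2 * s.im) * W ^ (2 * s.im) =
      Real.exp (σ * Real.log x + π * |s.re| + σ - σ * Real.log W) := by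
    rw [Real.rpow_def_of_pos hx, Real.rpow_def_of_pos hWpos,
      ← Real.exp_add, ← Real.exp_add]
    congr 1
    rw [hσdef]
    ring
  have hlhseq : K * Real.exp (4 * π ^ 2) ≤
      Real.exp (4 * π ^ 2) / 0.39 *
        Real.exp (σ * Real.log x + π * |s.re| + σ - σ * Real.log R) := by
    have hKle : K ≤ Real.exp (σ * L + π * |s.re| - σ * Real.log (R / (2 * Real.exp 1))) / 0.39 := by
      rw [hK]
      rw [div_le_div_iff₀ hΓpos (by norm_num)]
      calc Real.exp (σ * L) * 0.39
          = 0.39 * Real.exp (σ * Real.log (R / (2 * Real.exp 1)) - π * |s.re|) *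
            Real.exp (σ * L + π * |s.re| - σ * Real.log (R / (2 * Real.exp 1))) := by
            have e2 : Real.exp (σ * Real.log (R / (2 * Real.exp 1)) - π * |s.re|) *
                Real.exp (σ * L + π * |s.re| - σ * Real.log (R / (2 * Real.exp 1))) =
                Real.exp (σ * L) := by
              rw [← Real.exp_add]
              congr 1
              ring
            linear_combination (-0.39 : ℝ) * e2
        _ ≤ ‖Complex.Gamma z‖ *
              Real.exp (σ * L + π * |s.re| - σ * Real.log (R / (2 * Real.exp 1))) := by
            apply mul_le_mul_of_nonneg_right hgam (Real.exp_pos _).le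
        _ = Real.exp (σ * L + π * |s.re| - σ * Real.log (R / (2 * Real.exp 1))) *
              ‖Complex.Gamma z‖ := by ring
    have hexpeq : σ * L + π * |s.re| - σ * Real.log (R / (2 * Real.exp 1)) =
        σ * Real.log x + π * |s.re| + σ - σ * Real.log R := by
      rw [hL, Real.log_div (by linarith) (by norm_num),
        Real.log_div (by positivity) (by positivity), Real.log_mul (by norm_num) (Real.exp_pos 1).ne',
        Real.log_exp]
      ring
    calc K * Real.exp (4 * π ^ 2)
        ≤ (Real.exp (σ * L + π * |s.re| - σ * Real.log (R / (2 * Real.exp 1))) / 0.39) *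
            Real.exp (4 * π ^ 2) := by
          apply mul_le_mul_of_nonneg_right hKle (Real.exp_pos _).le
      _ = Real.exp (4 * π ^ 2) / 0.39 *
            Real.exp (σ * Real.log x + π * |s.re| + σ - σ * Real.log R) := by
          rw [hexpeq]; ring
  calc ‖besselJ ν x‖ ≤ K * Real.exp (4 * π ^ 2) := htsum
    _ ≤ Real.exp (4 * π ^ 2) / 0.39 *
          Real.exp (σ * Real.log x + π * |s.re| + σ - σ * Real.log R) := hlhseq
    _ ≤ Real.exp (4 * π ^ 2) / 0.39 *
          Real.exp (σ * Real.log x + π * |s.re| + σ - σ * Real.log W) := by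
        apply mul_le_mul_of_nonneg_left _ (by positivity)
        apply Real.exp_le_exp.mpr
        have hlog : Real.log W ≤ Real.log R := Real.log_le_log hWpos hWR
        nlinarith
    _ = Real.exp (4 * π ^ 2) / 0.39 * x ^ (-2 * s.im) *
          Real.exp (π * |s.re| - 2 * s.im) * W ^ (2 * s.im) := by
        rw [← hrhseq]
        ring
end

section
/- Let d be a positive integer, let X ≥ 1 be real, and let a : ℕ → ℂ. Then Σ*_{χ mod d} |Σ_{1 ≤ n ≤ X} χ(n) a(n)|² ≤ (d + X) · Σ_{1 ≤ n ≤ X} |a(n)|². -/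
open MeasureTheory Real Complex


lemma ortho (d : ℕ) [NeZero d] (x y : ZMod d) :
    ∑ χ : DirichletCharacter ℂ d, χ x * star (χ y)
      = if IsUnit y ∧ y = x then (d.totient : ℂ) else 0 := by
  by_cases hy : IsUnit y
  · have hstar : ∀ χ : DirichletCharacter ℂ d, χ x * star (χ y) = χ y⁻¹ * χ x := by
      intro χ
      have h1 : χ y * χ y⁻¹ = 1 := by
        rw [← map_mul, ZMod.mul_inv_of_unit _ hy, map_one]
      rw [MulChar.star_apply' χ y, MulChar.inv_apply_eq_inv',
        inv_eq_of_mul_eq_one_right h1, mul_comm]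
    simp_rw [hstar]
    rw [DirichletCharacter.sum_char_inv_mul_char_eq ℂ hy x]
    simp [hy]
  · simp [MulChar.map_nonunit _ hy, hy]

lemma count_residues (d : ℕ) (N : ℕ) (n : ℕ) :
    (((Finset.Icc 1 N).filter (fun m : ℕ => (m : ZMod d) = (n : ZMod d))).card : ℝ)
      ≤ (N : ℝ) / d + 1 := by
  have hcard : ((Finset.Icc 1 N).filter (fun m : ℕ => (m : ZMod d) = (n : ZMod d))).card
      ≤ (Finset.Icc 0 (N / d)).card := by
    apply Finset.card_le_card_of_injOn (fun m => m / d)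
    · intro m hm
      simp only [Finset.mem_coe, Finset.mem_filter, Finset.mem_Icc] at hm
      simp only [Finset.mem_coe, Finset.mem_Icc]
      exact ⟨Nat.zero_le _, Nat.div_le_div_right hm.1.2⟩
    · intro m₁ h₁ m₂ h₂ hdiv
      simp only [Finset.coe_filter, Set.mem_setOf_eq, Finset.mem_Icc] at h₁ h₂
      have hmod : m₁ % d = m₂ % d := by
        have := h₁.2.trans h₂.2.symm
        rwa [ZMod.natCast_eq_natCast_iff] at this
      change m₁ / d = m₂ / d at hdiv
      calc m₁ = d * (m₁ / d) + m₁ % d := (Nat.div_add_mod m₁ d).symm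
        _ = d * (m₂ / d) + m₂ % d := by rw [hdiv, hmod]
        _ = m₂ := Nat.div_add_mod m₂ d
  calc (((Finset.Icc 1 N).filter (fun m : ℕ => (m : ZMod d) = (n : ZMod d))).card : ℝ)
      ≤ ((Finset.Icc 0 (N / d)).card : ℝ) := by exact_mod_cast hcard
    _ = ((N / d : ℕ) : ℝ) + 1 := by rw [Nat.card_Icc]; push_cast; ring
    _ ≤ (N : ℝ) / d + 1 := by
        have := Nat.cast_div_le (m := N) (n := d) (α := ℝ)
        linarith

/-- The sum of `f` over all primitive Dirichlet characters modulo `d`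
(a finite sum, since there are finitely many Dirichlet characters modulo `d`). -/
noncomputable def sumPrimitive (d : ℕ) (f : DirichletCharacter ℂ d → ℝ) : ℝ :=
  ∑ᶠ χ ∈ {χ : DirichletCharacter ℂ d | χ.IsPrimitive}, f χ

/-- Large sieve type bound: `Σ*_{χ mod d} |Σ_{n ≤ X} χ(n) a(n)|² ≤ (d + X) Σ_{n ≤ X} |a(n)|²`. -/
theorem large_sieve_primitive (d : ℕ) (hd : 0 < d) (X : ℝ) (hX : 1 ≤ X) (a : ℕ → ℂ) :
    sumPrimitive d (fun χ => ‖∑ n ∈ Finset.Icc 1 ⌊X⌋₊, χ (n : ZMod d) * a n‖ ^ 2)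
      ≤ (d + X) * ∑ n ∈ Finset.Icc 1 ⌊X⌋₊, ‖a n‖ ^ 2 := by
  haveI : NeZero d := ⟨hd.ne'⟩
  set S := Finset.Icc 1 ⌊X⌋₊ with hS
  -- Step 1: bound by the sum over all characters
  have h1 : sumPrimitive d (fun χ => ‖∑ n ∈ S, χ (n : ZMod d) * a n‖ ^ 2)
      ≤ ∑ χ : DirichletCharacter ℂ d, ‖∑ n ∈ S, χ (n : ZMod d) * a n‖ ^ 2 := by
    rw [sumPrimitive, finsum_mem_eq_finite_toFinset_sum _ (Set.toFinite _)]
    exact Finset.sum_le_sum_of_subset_of_nonneg (Finset.subset_univ _)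
      (fun χ _ _ => by positivity)
  refine h1.trans ?_
  -- Step 2: orthogonality expansion
  have key : ∑ χ : DirichletCharacter ℂ d, ‖∑ n ∈ S, χ (n : ZMod d) * a n‖ ^ 2
      = (∑ n ∈ S, ∑ m ∈ S, (a n * star (a m)) *
          (if IsUnit ((m : ZMod d)) ∧ ((m : ZMod d) = (n : ZMod d))
            then (d.totient : ℂ) else 0)).re := by
    have e1 : ∀ χ : DirichletCharacter ℂ d, ‖∑ n ∈ S, χ (n : ZMod d) * a n‖ ^ 2
        = ((∑ n ∈ S, χ (n : ZMod d) * a n) * star (∑ m ∈ S, χ (m : ZMod d) * a m)).re := by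
      intro χ
      rw [RCLike.star_def, Complex.mul_conj', ← Complex.ofReal_pow, Complex.ofReal_re]
    simp_rw [e1, ← Complex.re_sum]
    congr 1
    have e2 : ∀ χ : DirichletCharacter ℂ d,
        (∑ n ∈ S, χ (n : ZMod d) * a n) * star (∑ m ∈ S, χ (m : ZMod d) * a m)
        = ∑ n ∈ S, ∑ m ∈ S, (a n * star (a m)) * (χ (n : ZMod d) * star (χ (m : ZMod d))) := by
      intro χ
      rw [star_sum, Finset.sum_mul_sum]
      refine Finset.sum_congr rfl fun n _ => Finset.sum_congr rfl fun m _ => ?_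
      rw [star_mul']
      ring
    simp_rw [e2]
    rw [Finset.sum_comm]
    refine Finset.sum_congr rfl fun n _ => ?_
    rw [Finset.sum_comm]
    refine Finset.sum_congr rfl fun m _ => ?_
    rw [← Finset.mul_sum, ortho]
  rw [key, Complex.re_sum]
  set T : ℝ := (d.totient : ℝ) with hT
  have hstep1 : ∑ n ∈ S, (∑ m ∈ S, (a n * star (a m)) *
        (if IsUnit ((m : ZMod d)) ∧ ((m : ZMod d) = (n : ZMod d))
          then (d.totient : ℂ) else 0)).re
      ≤ ∑ n ∈ S, ∑ m ∈ S,
          (if (m : ZMod d) = (n : ZMod d) then T * (‖a n‖ * ‖a m‖) else 0) := by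
    refine Finset.sum_le_sum fun n _ => ?_
    rw [Complex.re_sum]
    refine Finset.sum_le_sum fun m _ => ?_
    by_cases hc : (m : ZMod d) = (n : ZMod d)
    · rw [if_pos hc]
      by_cases hu : IsUnit ((m : ZMod d))
      · rw [if_pos ⟨hu, hc⟩]
        calc ((a n * star (a m)) * (d.totient : ℂ)).re
            ≤ ‖(a n * star (a m)) * (d.totient : ℂ)‖ := Complex.re_le_norm _
          _ = T * (‖a n‖ * ‖a m‖) := by
              rw [norm_mul, norm_mul, norm_star, Complex.norm_natCast]; ring
      · rw [if_neg (fun h => hu h.1), mul_zero, Complex.zero_re]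
        positivity
    · rw [if_neg (fun h => hc h.2), if_neg hc, mul_zero, Complex.zero_re]
  refine hstep1.trans ?_
  set D : ℝ := ∑ n ∈ S, ∑ m ∈ S,
      (if (m : ZMod d) = (n : ZMod d) then T * ‖a n‖ ^ 2 else 0) with hDdef
  have hstep2 : ∑ n ∈ S, ∑ m ∈ S,
        (if (m : ZMod d) = (n : ZMod d) then T * (‖a n‖ * ‖a m‖) else 0) ≤ D := by
    have hDD : ∑ n ∈ S, ∑ m ∈ S,
        (if (m : ZMod d) = (n : ZMod d) then T * ‖a m‖ ^ 2 else 0) = D := by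
      rw [hDdef, Finset.sum_comm]
      exact Finset.sum_congr rfl fun n _ => Finset.sum_congr rfl fun m _ =>
        if_congr eq_comm rfl rfl
    have hsplit : ∀ n m : ℕ,
        (if (m : ZMod d) = (n : ZMod d) then T * (‖a n‖ * ‖a m‖) else 0)
        ≤ (if (m : ZMod d) = (n : ZMod d) then T * ‖a n‖ ^ 2 else 0) / 2
          + (if (m : ZMod d) = (n : ZMod d) then T * ‖a m‖ ^ 2 else 0) / 2 := by
      intro n m
      by_cases hc : (m : ZMod d) = (n : ZMod d)
      · simp only [hc, if_true]
        have hT0 : (0:ℝ) ≤ T := by rw [hT]; positivity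
        nlinarith [sq_nonneg (‖a n‖ - ‖a m‖), norm_nonneg (a n), norm_nonneg (a m)]
      · simp [hc]
    calc ∑ n ∈ S, ∑ m ∈ S,
          (if (m : ZMod d) = (n : ZMod d) then T * (‖a n‖ * ‖a m‖) else 0)
        ≤ ∑ n ∈ S, ∑ m ∈ S,
          ((if (m : ZMod d) = (n : ZMod d) then T * ‖a n‖ ^ 2 else 0) / 2
          + (if (m : ZMod d) = (n : ZMod d) then T * ‖a m‖ ^ 2 else 0) / 2) :=
          Finset.sum_le_sum fun n _ => Finset.sum_le_sum fun m _ => hsplit n m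
      _ = D / 2 + D / 2 := by
          simp_rw [Finset.sum_add_distrib, ← Finset.sum_div]
          rw [hDD, ← hDdef]
      _ = D := by ring
  refine hstep2.trans ?_
  have hD : D = ∑ n ∈ S, (T * ‖a n‖ ^ 2) *
      ((S.filter fun m : ℕ => (m : ZMod d) = (n : ZMod d)).card : ℝ) := by
    refine Finset.sum_congr rfl fun n _ => ?_
    rw [← Finset.sum_filter, Finset.sum_const, nsmul_eq_mul, mul_comm]
  rw [hD]
  have hbound : ∀ n ∈ S, (T * ‖a n‖ ^ 2) *
      ((S.filter fun m : ℕ => (m : ZMod d) = (n : ZMod d)).card : ℝ)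
      ≤ ((d : ℝ) + X) * ‖a n‖ ^ 2 := by
    intro n _
    have h1 : ((S.filter fun m : ℕ => (m : ZMod d) = (n : ZMod d)).card : ℝ)
        ≤ X / d + 1 := by
      refine (count_residues d ⌊X⌋₊ n).trans ?_
      have hfl : (⌊X⌋₊ : ℝ) ≤ X := Nat.floor_le (by linarith)
      gcongr
    have hTd : T ≤ (d : ℝ) := by rw [hT]; exact_mod_cast Nat.totient_le d
    have hX0 : (0:ℝ) ≤ X := by linarith
    have hd0 : (0:ℝ) < d := by exact_mod_cast hd
    calc (T * ‖a n‖ ^ 2) *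
        ((S.filter fun m : ℕ => (m : ZMod d) = (n : ZMod d)).card : ℝ)
        ≤ ((d : ℝ) * ‖a n‖ ^ 2) * (X / d + 1) := by
          refine mul_le_mul (by gcongr) h1 (Nat.cast_nonneg _) (by positivity)
      _ = ((d : ℝ) + X) * ‖a n‖ ^ 2 := by field_simp; ring
  calc ∑ n ∈ S, (T * ‖a n‖ ^ 2) *
      ((S.filter fun m : ℕ => (m : ZMod d) = (n : ZMod d)).card : ℝ)
      ≤ ∑ n ∈ S, ((d : ℝ) + X) * ‖a n‖ ^ 2 := Finset.sum_le_sum hbound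
    _ = ((d : ℝ) + X) * ∑ n ∈ S, ‖a n‖ ^ 2 := (Finset.mul_sum _ _ _).symm
end

section
/- There is an absolute constant C such that the following holds: for every integer d ≥ 2, every real X ≥ 2, and every b : ℕ → ℂ with |b(n)| ≤ 1 for all n, one has ∫_{−∞}^{∞} Σ*_{χ mod d} |Σ_{1 ≤ n ≤ X} b(n) χ(n) n^{−1/2−it}|⁴ dt/(t²+1) ≤ C · (d + X²) · (log X)⁴. -/
open MeasureTheory Real Complex

section Auxiliary

open Finset

variable {d : ℕ} [NeZero d]

omit [NeZero d] in
lemma conj_char (χ : DirichletCharacter ℂ d) {r : ZMod d} (h : IsUnit r) :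
    (starRingEnd ℂ) (χ r) = χ r⁻¹ := by
  have h1 : χ r * χ r⁻¹ = 1 := by
    rw [← map_mul, ZMod.mul_inv_of_unit r h, map_one]
  have h2 : ‖χ r‖ = 1 := by
    have := χ.unit_norm_eq_one h.unit
    rwa [h.unit_spec] at this
  have h3 : χ r⁻¹ = (χ r)⁻¹ := eq_inv_of_mul_eq_one_left (by rw [mul_comm] at h1; exact h1)
  rw [h3, ← Complex.inv_eq_conj h2]

lemma orth (r r' : ZMod d) :
    ∑ χ : DirichletCharacter ℂ d, χ r * (starRingEnd ℂ) (χ r') =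
      if r = r' ∧ IsUnit r then (d.totient : ℂ) else 0 := by
  haveI : NeZero ((Monoid.exponent (ZMod d)ˣ : ℕ) : ℂ) := by
    refine ⟨?_⟩
    exact_mod_cast Monoid.exponent_ne_zero_of_finite (G := (ZMod d)ˣ)
  by_cases hu : IsUnit r'
  · have hc : ∀ χ : DirichletCharacter ℂ d, (starRingEnd ℂ) (χ r') = χ r'⁻¹ :=
      fun χ => conj_char χ hu
    simp_rw [hc]
    have := DirichletCharacter.sum_char_inv_mul_char_eq ℂ hu r
    simp_rw [mul_comm] at this
    rw [this]
    by_cases h : r' = r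
    · subst h; simp [hu]
    · rw [if_neg h, if_neg]
      rintro ⟨rfl, _⟩
      exact h rfl
  · have hz : ∀ χ : DirichletCharacter ℂ d, (starRingEnd ℂ) (χ r') = 0 := by
      intro χ; rw [χ.map_nonunit hu, map_zero]
    simp_rw [hz, mul_zero, Finset.sum_const_zero]
    rw [if_neg]
    rintro ⟨rfl, h2⟩
    exact hu h2

/-- Orthogonality step: sum over all characters of squared norm. -/
lemma step2 (A : ZMod d → ℂ) :
    ∑ χ : DirichletCharacter ℂ d, ‖∑ r : ZMod d, A r * χ r‖ ^ 2 =
      (d.totient : ℝ) * ∑ r ∈ Finset.univ.filter (fun r : ZMod d => IsUnit r), ‖A r‖ ^ 2 := by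
  have hnorm : ∀ z : ℂ, ‖z‖ ^ 2 = (z * (starRingEnd ℂ) z).re := by
    intro z
    rw [Complex.mul_conj]
    simp [Complex.normSq_eq_norm_sq, ← Complex.ofReal_pow]
  calc ∑ χ : DirichletCharacter ℂ d, ‖∑ r : ZMod d, A r * χ r‖ ^ 2
      = (∑ χ : DirichletCharacter ℂ d,
          (∑ r : ZMod d, A r * χ r) * (starRingEnd ℂ) (∑ r' : ZMod d, A r' * χ r')).re := by
        rw [Complex.re_sum]
        exact Finset.sum_congr rfl fun χ _ => hnorm _
    _ = (∑ r : ZMod d, ∑ r' : ZMod d, (A r * (starRingEnd ℂ) (A r')) *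
          ∑ χ : DirichletCharacter ℂ d, χ r * (starRingEnd ℂ) (χ r')).re := by
        congr 1
        simp_rw [map_sum, map_mul, Finset.sum_mul_sum, Finset.mul_sum]
        rw [Finset.sum_comm]
        refine Finset.sum_congr rfl fun r _ => ?_
        rw [Finset.sum_comm]
        refine Finset.sum_congr rfl fun r' _ => Finset.sum_congr rfl fun χ _ => by ring
    _ = (∑ r : ZMod d, if IsUnit r then A r * (starRingEnd ℂ) (A r) * (d.totient : ℂ) else 0).re := by
        congr 1
        refine Finset.sum_congr rfl fun r _ => ?_
        simp_rw [orth, ite_and, mul_ite, mul_zero]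
        rw [Finset.sum_ite_eq (Finset.univ) r
          (fun r' => if IsUnit r then A r * (starRingEnd ℂ) (A r') * (d.totient : ℂ) else 0)]
        simp
    _ = (d.totient : ℝ) * ∑ r ∈ Finset.univ.filter (fun r : ZMod d => IsUnit r), ‖A r‖ ^ 2 := by
        rw [Complex.re_sum, Finset.mul_sum, Finset.sum_filter]
        refine Finset.sum_congr rfl fun r _ => ?_
        split_ifs with h
        · rw [show A r * (starRingEnd ℂ) (A r) * (d.totient : ℂ)
              = (d.totient : ℂ) * (A r * (starRingEnd ℂ) (A r)) by ring]
          rw [Complex.mul_conj]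
          rw [Complex.normSq_eq_norm_sq]
          rw [show ((d.totient : ℂ)) = ((d.totient : ℝ) : ℂ) by push_cast; ring,
            ← Complex.ofReal_mul, Complex.ofReal_re]
        · simp

variable {d : ℕ} [NeZero d]

lemma fiber_card (M : ℕ) (r : ZMod d) :
    ((Finset.Icc 1 M).filter (fun m : ℕ => ((m : ZMod d) = r))).card ≤ M / d + 1 := by
  refine le_trans (Finset.card_le_card_of_injOn (t := Finset.range (M / d + 1))
    (fun m => m / d) ?_ ?_) (by simp)
  · intro m hm
    simp only [Finset.mem_coe, Finset.mem_filter, Finset.mem_Icc] at hm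
    simp only [Finset.mem_coe, Finset.mem_range]
    exact Nat.lt_succ_of_le (Nat.div_le_div_right hm.1.2)
  · intro m hm m' hm' hmm
    simp only [Finset.coe_filter, Set.mem_setOf_eq, Finset.mem_Icc] at hm hm'
    have hmod : m % d = m' % d := by
      have : (m : ZMod d) = (m' : ZMod d) := hm.2.trans hm'.2.symm
      exact (ZMod.natCast_eq_natCast_iff' m m' d).mp this
    have hdd : m / d = m' / d := hmm
    rw [← Nat.div_add_mod m d, ← Nat.div_add_mod m' d, hmod, hdd]

lemma largesieve (M : ℕ) (a : ℕ → ℂ) :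
    ∑ χ : DirichletCharacter ℂ d, ‖∑ m ∈ Finset.Icc 1 M, a m * χ (m : ZMod d)‖ ^ 2
      ≤ ((d : ℝ) + M) * ∑ m ∈ Finset.Icc 1 M, ‖a m‖ ^ 2 := by
  set F : ZMod d → Finset ℕ :=
    fun r => (Finset.Icc 1 M).filter (fun m : ℕ => ((m : ZMod d) = r)) with hF
  set A : ZMod d → ℂ := fun r => ∑ m ∈ F r, a m with hA
  have step1 : ∀ χ : DirichletCharacter ℂ d,
      ∑ m ∈ Finset.Icc 1 M, a m * χ (m : ZMod d) = ∑ r : ZMod d, A r * χ r := by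
    intro χ
    rw [← Finset.sum_fiberwise (Finset.Icc 1 M) (fun m : ℕ => (m : ZMod d))
      (fun m => a m * χ (m : ZMod d))]
    refine Finset.sum_congr rfl fun r _ => ?_
    rw [hA, Finset.sum_mul]
    refine Finset.sum_congr rfl fun m hm => ?_
    rw [(Finset.mem_filter.mp hm).2]
  simp_rw [step1]
  rw [step2 A]
  have hCS : ∀ r : ZMod d, ‖A r‖ ^ 2 ≤ ((M / d + 1 : ℕ) : ℝ) * ∑ m ∈ F r, ‖a m‖ ^ 2 := by
    intro r
    have h1 : ‖A r‖ ≤ ∑ m ∈ F r, ‖a m‖ := norm_sum_le _ _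
    have h2 : ‖A r‖ ^ 2 ≤ (∑ m ∈ F r, ‖a m‖) ^ 2 :=
      pow_le_pow_left₀ (norm_nonneg _) h1 2
    have h3 : (∑ m ∈ F r, ‖a m‖) ^ 2 ≤ ((F r).card : ℝ) * ∑ m ∈ F r, ‖a m‖ ^ 2 :=
      sq_sum_le_card_mul_sum_sq
    have h4 : ((F r).card : ℝ) ≤ ((M / d + 1 : ℕ) : ℝ) := by
      exact_mod_cast fiber_card M r
    refine h2.trans (h3.trans ?_)
    exact mul_le_mul_of_nonneg_right h4 (Finset.sum_nonneg fun m _ => by positivity)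
  calc (d.totient : ℝ) * ∑ r ∈ Finset.univ.filter (fun r : ZMod d => IsUnit r), ‖A r‖ ^ 2
      ≤ (d.totient : ℝ) * ∑ r ∈ Finset.univ.filter (fun r : ZMod d => IsUnit r),
          ((M / d + 1 : ℕ) : ℝ) * ∑ m ∈ F r, ‖a m‖ ^ 2 := by
        refine mul_le_mul_of_nonneg_left (Finset.sum_le_sum fun r _ => hCS r) (by positivity)
    _ ≤ (d.totient : ℝ) * ((M / d + 1 : ℕ) : ℝ) * ∑ r : ZMod d, ∑ m ∈ F r, ‖a m‖ ^ 2 := by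
        rw [← Finset.mul_sum, ← mul_assoc]
        have hnn : (0 : ℝ) ≤ (d.totient : ℝ) * ((M / d + 1 : ℕ) : ℝ) := by positivity
        refine mul_le_mul_of_nonneg_left ?_ hnn
        refine Finset.sum_le_sum_of_subset_of_nonneg (Finset.filter_subset _ _) ?_
        intro r _ _
        exact Finset.sum_nonneg fun m _ => sq_nonneg _
    _ = (d.totient : ℝ) * ((M / d + 1 : ℕ) : ℝ) * ∑ m ∈ Finset.Icc 1 M, ‖a m‖ ^ 2 := by
        rw [Finset.sum_fiberwise (Finset.Icc 1 M) (fun m : ℕ => (m : ZMod d))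
          (fun m => ‖a m‖ ^ 2)]
    _ ≤ ((d : ℝ) + M) * ∑ m ∈ Finset.Icc 1 M, ‖a m‖ ^ 2 := by
        refine mul_le_mul_of_nonneg_right ?_
          (Finset.sum_nonneg fun m _ => by positivity)
        have : d.totient * (M / d + 1) ≤ d + M := by
          calc d.totient * (M / d + 1) ≤ d * (M / d + 1) :=
                Nat.mul_le_mul_right _ (Nat.totient_le d)
            _ = d * (M / d) + d := by ring
            _ ≤ M + d := by
                have := Nat.div_mul_le_self M d
                have h5 : d * (M / d) ≤ M := by rw [mul_comm]; exact this
                omega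
            _ = d + M := by ring
        calc (d.totient : ℝ) * ((M / d + 1 : ℕ) : ℝ) = ((d.totient * (M / d + 1) : ℕ) : ℝ) := by
              push_cast; ring
          _ ≤ ((d + M : ℕ) : ℝ) := by exact_mod_cast this
          _ = (d : ℝ) + M := by push_cast; ring

lemma recon {a b c e : ℕ} (ha : 1 ≤ a) (hb : 1 ≤ b) (hc : 1 ≤ c) (h : a * b = c * e) :
    a = (a.gcd c) * (a / (a.gcd c)) ∧ c = (a.gcd c) * (c / (a.gcd c)) ∧
      b = (c / (a.gcd c)) * (b / (c / (a.gcd c))) ∧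
      e = (a / (a.gcd c)) * (b / (c / (a.gcd c))) := by
  set g := a.gcd c with hgdef
  have hg : 0 < g := Nat.gcd_pos_of_pos_left _ (by omega)
  have hga : g ∣ a := Nat.gcd_dvd_left a c
  have hgc : g ∣ c := Nat.gcd_dvd_right a c
  have ha' : a = g * (a / g) := (Nat.mul_div_cancel' hga).symm
  have hc' : c = g * (c / g) := (Nat.mul_div_cancel' hgc).symm
  set x := a / g with hx
  set y := c / g with hy'
  have hy : 0 < y := Nat.div_pos (Nat.le_of_dvd (by omega) hgc) hg
  have hcop : Nat.Coprime x y := Nat.coprime_div_gcd_div_gcd hg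
  have hkey : x * b = y * e := by
    have h2 : g * (x * b) = g * (y * e) := by
      rw [← mul_assoc, ← mul_assoc, ← ha', ← hc']; exact h
    exact Nat.eq_of_mul_eq_mul_left hg h2
  have hyb : y ∣ b := (Nat.Coprime.dvd_of_dvd_mul_left hcop.symm ⟨e, hkey⟩)
  have hb' : b = y * (b / y) := (Nat.mul_div_cancel' hyb).symm
  have he' : e = x * (b / y) := by
    have h3 : y * (x * (b / y)) = y * e := by
      calc y * (x * (b / y)) = x * (y * (b / y)) := by ring
        _ = x * b := by rw [← hb']
        _ = y * e := hkey
    exact (Nat.eq_of_mul_eq_mul_left hy h3).symm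
  exact ⟨ha', hc', hb', he'⟩

lemma quadsum (N : ℕ) :
    ∑ q ∈ ((Finset.Icc 1 N ×ˢ Finset.Icc 1 N) ×ˢ (Finset.Icc 1 N ×ˢ Finset.Icc 1 N)).filter
        (fun q => q.1.1 * q.1.2 = q.2.1 * q.2.2), ((q.1.1 * q.1.2 : ℕ) : ℝ)⁻¹
      ≤ (∑ n ∈ Finset.Icc 1 N, (n : ℝ)⁻¹) ^ 4 := by
  set T : Finset (ℕ × ℕ × ℕ × ℕ) :=
    Finset.Icc 1 N ×ˢ (Finset.Icc 1 N ×ˢ (Finset.Icc 1 N ×ˢ Finset.Icc 1 N)) with hT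
  set u : ℕ × ℕ × ℕ × ℕ → ℝ := fun v => ((v.1 * (v.2.1 * (v.2.2.1 * v.2.2.2)) : ℕ) : ℝ)⁻¹
    with hu
  set G := ((Finset.Icc 1 N ×ˢ Finset.Icc 1 N) ×ˢ (Finset.Icc 1 N ×ˢ Finset.Icc 1 N)).filter
      (fun q => q.1.1 * q.1.2 = q.2.1 * q.2.2) with hG
  set i : (ℕ × ℕ) × (ℕ × ℕ) → ℕ × ℕ × ℕ × ℕ := fun q =>
    (q.1.1.gcd q.2.1, q.1.1 / (q.1.1.gcd q.2.1),
      (q.2.1 / (q.1.1.gcd q.2.1), q.1.2 / (q.2.1 / (q.1.1.gcd q.2.1)))) with hi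
  -- basic facts about members of G
  have hmem : ∀ q ∈ G, 1 ≤ q.1.1 ∧ q.1.1 ≤ N ∧ 1 ≤ q.1.2 ∧ q.1.2 ≤ N ∧
      1 ≤ q.2.1 ∧ q.2.1 ≤ N ∧ 1 ≤ q.2.2 ∧ q.2.2 ≤ N ∧ q.1.1 * q.1.2 = q.2.1 * q.2.2 := by
    intro q hq
    simp only [hG, Finset.mem_filter, Finset.mem_product, Finset.mem_Icc] at hq
    tauto
  have hrec : ∀ q ∈ G, q.1.1 = (i q).1 * (i q).2.1 ∧ q.2.1 = (i q).1 * (i q).2.2.1 ∧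
      q.1.2 = (i q).2.2.1 * (i q).2.2.2 ∧ q.2.2 = (i q).2.1 * (i q).2.2.2 := by
    intro q hq
    obtain ⟨h1, _, h2, _, h3, _, _, _, h9⟩ := hmem q hq
    obtain ⟨e1, e2, e3, e4⟩ := recon h1 h2 h3 h9
    exact ⟨e1, e2, e3, e4⟩
  have hinj : Set.InjOn i G := by
    intro q hq q' hq' hqq
    obtain ⟨a1, a2, a3, a4⟩ := hrec q (by simpa using hq)
    obtain ⟨b1, b2, b3, b4⟩ := hrec q' (by simpa using hq')
    have hq2 : q = (((i q).1 * (i q).2.1, (i q).2.2.1 * (i q).2.2.2),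
        ((i q).1 * (i q).2.2.1, (i q).2.1 * (i q).2.2.2)) :=
      Prod.ext (Prod.ext a1 a3) (Prod.ext a2 a4)
    have hq'2 : q' = (((i q').1 * (i q').2.1, (i q').2.2.1 * (i q').2.2.2),
        ((i q').1 * (i q').2.2.1, (i q').2.1 * (i q').2.2.2)) :=
      Prod.ext (Prod.ext b1 b3) (Prod.ext b2 b4)
    rw [hq2, hq'2, hqq]
  have hmap : ∀ q ∈ G, i q ∈ T := by
    intro q hq
    obtain ⟨h1, h2, h3, h4, h5, h6, h7, h8, h9⟩ := hmem q hq
    obtain ⟨a1, a2, a3, a4⟩ := hrec q hq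
    have hgpos : 0 < (i q).1 := Nat.gcd_pos_of_pos_left _ (by omega)
    have hgle : (i q).1 ≤ N := (Nat.le_of_dvd (by omega) (Nat.gcd_dvd_left _ _)).trans h2
    have hxpos : 0 < (i q).2.1 := by
      rcases Nat.eq_zero_or_pos (i q).2.1 with h0 | h0
      · rw [h0, mul_zero] at a1; omega
      · exact h0
    have hxle : (i q).2.1 ≤ N := (Nat.div_le_self _ _).trans h2
    have hypos : 0 < (i q).2.2.1 := by
      rcases Nat.eq_zero_or_pos (i q).2.2.1 with h0 | h0
      · rw [h0, mul_zero] at a2; omega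
      · exact h0
    have hyle : (i q).2.2.1 ≤ N := (Nat.div_le_self _ _).trans h6
    have hzpos : 0 < (i q).2.2.2 := by
      rcases Nat.eq_zero_or_pos (i q).2.2.2 with h0 | h0
      · rw [h0, mul_zero] at a3; omega
      · exact h0
    have hzle : (i q).2.2.2 ≤ N := (Nat.div_le_self _ _).trans h4
    simp only [hT, Finset.mem_product, Finset.mem_Icc]
    exact ⟨⟨hgpos, hgle⟩, ⟨hxpos, hxle⟩, ⟨hypos, hyle⟩, ⟨hzpos, hzle⟩⟩
  have hweight : ∀ q ∈ G, ((q.1.1 * q.1.2 : ℕ) : ℝ)⁻¹ = u (i q) := by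
    intro q hq
    obtain ⟨a1, a2, a3, a4⟩ := hrec q hq
    have : q.1.1 * q.1.2 = (i q).1 * ((i q).2.1 * ((i q).2.2.1 * (i q).2.2.2)) := by
      rw [a1]; rw [a3]; ring
    simp only [hu]
    rw [this]
  calc ∑ q ∈ G, ((q.1.1 * q.1.2 : ℕ) : ℝ)⁻¹ = ∑ q ∈ G, u (i q) :=
        Finset.sum_congr rfl hweight
    _ = ∑ v ∈ G.image i, u v :=
        (Finset.sum_image (fun x hx y hy h => hinj (by simpa using hx) (by simpa using hy) h)).symm
    _ ≤ ∑ v ∈ T, u v := by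
        refine Finset.sum_le_sum_of_subset_of_nonneg (Finset.image_subset_iff.mpr hmap) ?_
        intro v _ _
        rw [hu]
        positivity
    _ = (∑ n ∈ Finset.Icc 1 N, (n : ℝ)⁻¹) ^ 4 := by
        simp only [hu, hT]
        simp_rw [Finset.sum_product]
        push_cast
        simp_rw [mul_inv, ← Finset.mul_sum, ← Finset.sum_mul]
        ring

lemma pointwise {d : ℕ} [NeZero d] (N : ℕ) (b : ℕ → ℂ) (hb : ∀ n, ‖b n‖ ≤ 1)
    (s : ℂ) (hs : s.re = -(1/2)) :
    ∑ χ : DirichletCharacter ℂ d, ‖∑ n ∈ Finset.Icc 1 N, b n * χ (n : ZMod d) * (n : ℂ) ^ s‖ ^ 4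
      ≤ ((d : ℝ) + (N * N : ℕ)) * (∑ n ∈ Finset.Icc 1 N, (n : ℝ)⁻¹) ^ 4 := by
  set M := N * N with hM
  set P := Finset.Icc 1 N ×ˢ Finset.Icc 1 N with hP
  set c : ℕ → ℂ := fun m => ∑ p ∈ P.filter (fun p => p.1 * p.2 = m), b p.1 * b p.2 with hc
  set a : ℕ → ℂ := fun m => c m * (m : ℂ) ^ s with ha
  set τ : ℕ → ℕ := fun m => (P.filter (fun p => p.1 * p.2 = m)).card with hτ
  have hmaps : ∀ p ∈ P, p.1 * p.2 ∈ Finset.Icc 1 M := by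
    intro p hp
    simp only [hP, Finset.mem_product, Finset.mem_Icc] at hp
    simp only [Finset.mem_Icc, hM]
    exact ⟨Nat.mul_pos hp.1.1 hp.2.1, Nat.mul_le_mul hp.1.2 hp.2.2⟩
  -- Step 1: squaring the Dirichlet polynomial
  have hsq : ∀ χ : DirichletCharacter ℂ d,
      (∑ n ∈ Finset.Icc 1 N, b n * χ (n : ZMod d) * (n : ℂ) ^ s) ^ 2
        = ∑ m ∈ Finset.Icc 1 M, a m * χ (m : ZMod d) := by
    intro χ
    rw [sq, Finset.sum_mul_sum]
    rw [← Finset.sum_product' (s := Finset.Icc 1 N) (t := Finset.Icc 1 N)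
      (f := fun n n' => (b n * χ (n : ZMod d) * (n : ℂ) ^ s) *
        (b n' * χ (n' : ZMod d) * (n' : ℂ) ^ s))]
    have key : ∀ p ∈ P, (b p.1 * χ (p.1 : ZMod d) * (p.1 : ℂ) ^ s) *
        (b p.2 * χ (p.2 : ZMod d) * (p.2 : ℂ) ^ s)
        = (b p.1 * b p.2) * (χ ((p.1 * p.2 : ℕ) : ZMod d) * ((p.1 * p.2 : ℕ) : ℂ) ^ s) := by
      intro p hp
      have hχ : χ ((p.1 * p.2 : ℕ) : ZMod d) = χ (p.1 : ZMod d) * χ (p.2 : ZMod d) := by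
        rw [Nat.cast_mul, map_mul]
      have hcpow : ((p.1 * p.2 : ℕ) : ℂ) ^ s = (p.1 : ℂ) ^ s * (p.2 : ℂ) ^ s := by
        have h1 : ((p.1 * p.2 : ℕ) : ℂ) = ((p.1 : ℝ) : ℂ) * ((p.2 : ℝ) : ℂ) := by push_cast; ring
        rw [h1, Complex.mul_cpow_ofReal_nonneg (Nat.cast_nonneg _) (Nat.cast_nonneg _)]
        norm_num
      rw [hχ, hcpow]; ring
    rw [Finset.sum_congr rfl key, ← Finset.sum_fiberwise_of_maps_to hmaps]
    refine Finset.sum_congr rfl fun m hm => ?_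
    have : ∀ p ∈ P.filter (fun p => p.1 * p.2 = m),
        (b p.1 * b p.2) * (χ ((p.1 * p.2 : ℕ) : ZMod d) * ((p.1 * p.2 : ℕ) : ℂ) ^ s)
          = (b p.1 * b p.2) * (χ ((m : ℕ) : ZMod d) * ((m : ℕ) : ℂ) ^ s) := by
      intro p hp
      rw [(Finset.mem_filter.mp hp).2]
    rw [Finset.sum_congr rfl this, ← Finset.sum_mul, ha]
    ring
  -- Step 2: fourth power as square of square
  have h4 : ∀ χ : DirichletCharacter ℂ d,
      ‖∑ n ∈ Finset.Icc 1 N, b n * χ (n : ZMod d) * (n : ℂ) ^ s‖ ^ 4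
        = ‖∑ m ∈ Finset.Icc 1 M, a m * χ (m : ZMod d)‖ ^ 2 := by
    intro χ
    rw [← hsq χ, norm_pow, ← pow_mul]
  simp_rw [h4]
  -- Step 3: large sieve
  refine (largesieve M a).trans ?_
  have hdM : (0 : ℝ) ≤ (d : ℝ) + M := by positivity
  refine mul_le_mul_of_nonneg_left ?_ hdM
  -- Step 4: coefficient bound
  have hcoef : ∀ m ∈ Finset.Icc 1 M, ‖a m‖ ^ 2 ≤ (τ m : ℝ) ^ 2 * (m : ℝ)⁻¹ := by
    intro m hm
    have hm1 : 1 ≤ m := (Finset.mem_Icc.mp hm).1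
    have hmpos : (0 : ℝ) < m := by exact_mod_cast hm1
    have hnorm_pow : ‖((m : ℕ) : ℂ) ^ s‖ = (m : ℝ) ^ (s.re) :=
      Complex.norm_natCast_cpow_of_pos hm1 s
    have hnc : ‖c m‖ ≤ (τ m : ℝ) := by
      refine (norm_sum_le _ _).trans ?_
      rw [hτ]
      calc ∑ p ∈ P.filter (fun p => p.1 * p.2 = m), ‖b p.1 * b p.2‖
          ≤ ∑ p ∈ P.filter (fun p => p.1 * p.2 = m), 1 := by
            refine Finset.sum_le_sum fun p _ => ?_
            rw [norm_mul]
            exact mul_le_one₀ (hb _) (norm_nonneg _) (hb _)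
        _ = ((P.filter (fun p => p.1 * p.2 = m)).card : ℝ) := by simp
    have hpow : ((m : ℝ) ^ s.re) ^ 2 = (m : ℝ)⁻¹ := by
      rw [hs, ← Real.rpow_natCast ((m : ℝ) ^ (-(1/2) : ℝ)) 2, ← Real.rpow_mul hmpos.le]
      norm_num [Real.rpow_neg_one]
    calc ‖a m‖ ^ 2 = ‖c m‖ ^ 2 * ((m : ℝ) ^ s.re) ^ 2 := by
          rw [ha, norm_mul, mul_pow, hnorm_pow]
      _ ≤ (τ m : ℝ) ^ 2 * ((m : ℝ) ^ s.re) ^ 2 := by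
          refine mul_le_mul_of_nonneg_right (pow_le_pow_left₀ (norm_nonneg _) hnc 2) ?_
          positivity
      _ = (τ m : ℝ) ^ 2 * (m : ℝ)⁻¹ := by rw [hpow]
  refine (Finset.sum_le_sum hcoef).trans ?_
  -- Step 5: divisor sum = quadruple sum
  set G := (P ×ˢ P).filter (fun q => q.1.1 * q.1.2 = q.2.1 * q.2.2) with hG
  have hGmaps : ∀ q ∈ G, q.1.1 * q.1.2 ∈ Finset.Icc 1 M := by
    intro q hq
    simp only [hG, Finset.mem_filter] at hq
    exact hmaps q.1 (Finset.mem_product.mp hq.1).1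
  have hfib : ∀ m, G.filter (fun q => q.1.1 * q.1.2 = m)
      = (P.filter (fun p => p.1 * p.2 = m)) ×ˢ (P.filter (fun p => p.1 * p.2 = m)) := by
    intro m
    ext q
    simp only [hG, Finset.mem_filter, Finset.mem_product]
    constructor
    · rintro ⟨⟨⟨hq1, hq2⟩, heq⟩, hm⟩
      exact ⟨⟨hq1, hm⟩, ⟨hq2, heq ▸ hm⟩⟩
    · rintro ⟨⟨hq1, hm1⟩, ⟨hq2, hm2⟩⟩
      exact ⟨⟨⟨hq1, hq2⟩, hm1.trans hm2.symm⟩, hm1⟩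
  have hdiv : ∑ m ∈ Finset.Icc 1 M, (τ m : ℝ) ^ 2 * (m : ℝ)⁻¹
      = ∑ q ∈ G, ((q.1.1 * q.1.2 : ℕ) : ℝ)⁻¹ := by
    rw [← Finset.sum_fiberwise_of_maps_to hGmaps (fun q => ((q.1.1 * q.1.2 : ℕ) : ℝ)⁻¹)]
    refine Finset.sum_congr rfl fun m hm => ?_
    have : ∀ q ∈ G.filter (fun q => q.1.1 * q.1.2 = m),
        ((q.1.1 * q.1.2 : ℕ) : ℝ)⁻¹ = ((m : ℕ) : ℝ)⁻¹ := by
      intro q hq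
      rw [(Finset.mem_filter.mp hq).2]
    rw [Finset.sum_congr rfl this, Finset.sum_const, hfib m, Finset.card_product]
    rw [hτ]
    simp [nsmul_eq_mul, sq]
  rw [hdiv]
  exact quadsum N

end Auxiliary

lemma sumPrimitive_nonneg {d : ℕ} (f : DirichletCharacter ℂ d → ℝ) (hf : ∀ χ, 0 ≤ f χ) :
    0 ≤ sumPrimitive d f := by
  have hfin : {χ : DirichletCharacter ℂ d | χ.IsPrimitive}.Finite := Set.toFinite _
  rw [sumPrimitive, finsum_mem_eq_finite_toFinset_sum _ hfin]
  exact Finset.sum_nonneg fun χ _ => hf χ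

lemma sumPrimitive_le {d : ℕ} (f : DirichletCharacter ℂ d → ℝ) (hf : ∀ χ, 0 ≤ f χ) :
    sumPrimitive d f ≤ ∑ χ : DirichletCharacter ℂ d, f χ := by
  have hfin : {χ : DirichletCharacter ℂ d | χ.IsPrimitive}.Finite := Set.toFinite _
  rw [sumPrimitive, finsum_mem_eq_finite_toFinset_sum _ hfin]
  exact Finset.sum_le_sum_of_subset_of_nonneg (Finset.subset_univ _) fun χ _ _ => hf χ

lemma harmonic_bound {X : ℝ} (hX : 2 ≤ X) :
    ∑ n ∈ Finset.Icc 1 ⌊X⌋₊, (n : ℝ)⁻¹ ≤ 3 * Real.log X := by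
  have h0 : (0:ℝ) < X := by linarith
  have h1 : ∑ n ∈ Finset.Icc 1 ⌊X⌋₊, (n : ℝ)⁻¹ = ((harmonic ⌊X⌋₊ : ℚ) : ℝ) := by
    rw [harmonic_eq_sum_Icc]
    push_cast
    rfl
  have h2 : ((harmonic ⌊X⌋₊ : ℚ) : ℝ) ≤ 1 + Real.log ⌊X⌋₊ := harmonic_le_one_add_log _
  have h3 : Real.log ⌊X⌋₊ ≤ Real.log X := by
    refine Real.log_le_log ?_ (Nat.floor_le h0.le)
    have : (2:ℕ) ≤ ⌊X⌋₊ := Nat.le_floor (by exact_mod_cast hX)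
    exact_mod_cast Nat.lt_of_lt_of_le Nat.zero_lt_two this
  have h4 : Real.log 2 ≤ Real.log X := Real.log_le_log two_pos hX
  have h5 : (0.6931471803 : ℝ) < Real.log 2 := Real.log_two_gt_d9
  rw [h1]
  nlinarith

/-- Fourth moment bound for Dirichlet polynomials with bounded coefficients:
`∫_ℝ Σ*_{χ mod d} |Σ_{n ≤ X} b(n) χ(n) n^{-1/2-it}|⁴ dt/(t²+1) ≤ C (d + X²) (log X)⁴`. -/
theorem fourth_moment_bounded_coeffs :
    ∃ C : ℝ, ∀ d : ℕ, 2 ≤ d → ∀ X : ℝ, 2 ≤ X → ∀ b : ℕ → ℂ, (∀ n, ‖b n‖ ≤ 1) →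
      (∫ t : ℝ, sumPrimitive d (fun χ =>
          ‖∑ n ∈ Finset.Icc 1 ⌊X⌋₊,
            b n * χ (n : ZMod d) * (n : ℂ) ^ (-(1 / 2 : ℂ) - Complex.I * t)‖ ^ 4) / (t ^ 2 + 1))
        ≤ C * (d + X ^ 2) * Real.log X ^ 4 := by
  refine ⟨324, fun d hd X hX b hb => ?_⟩
  haveI : NeZero d := ⟨by omega⟩
  have hX0 : (0:ℝ) < X := by linarith
  set N := ⌊X⌋₊ with hN
  set B : ℝ := ((d:ℝ) + X^2) * (3 * Real.log X)^4 with hB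
  have hlogX : 0 < Real.log X := Real.log_pos (by linarith)
  have hBnn : 0 ≤ B := by positivity
  have hptb : ∀ t : ℝ, sumPrimitive d (fun χ =>
      ‖∑ n ∈ Finset.Icc 1 N,
        b n * χ (n : ZMod d) * (n : ℂ) ^ (-(1 / 2 : ℂ) - Complex.I * t)‖ ^ 4) ≤ B := by
    intro t
    refine (sumPrimitive_le _ (fun χ => by positivity)).trans ?_
    have hs : ((-(1 / 2 : ℂ)) - Complex.I * (t : ℂ)).re = -(1/2) := by
      simp [Complex.sub_re, Complex.mul_re]
    refine (pointwise N b hb _ hs).trans ?_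
    have hH0 : (0:ℝ) ≤ ∑ n ∈ Finset.Icc 1 N, (n : ℝ)⁻¹ :=
      Finset.sum_nonneg fun n _ => by positivity
    have hHle : ∑ n ∈ Finset.Icc 1 N, (n : ℝ)⁻¹ ≤ 3 * Real.log X := harmonic_bound hX
    have hNle : ((N : ℝ)) ≤ X := Nat.floor_le hX0.le
    have hNN : ((N * N : ℕ) : ℝ) ≤ X^2 := by
      push_cast
      nlinarith [Nat.cast_nonneg (α := ℝ) N]
    rw [hB]
    refine mul_le_mul (by linarith) (pow_le_pow_left₀ hH0 hHle 4) (by positivity) (by positivity)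
  have hint : Integrable (fun t : ℝ => B * (1 + t^2)⁻¹) := integrable_inv_one_add_sq.const_mul B
  have hmono : (∫ t : ℝ, sumPrimitive d (fun χ =>
      ‖∑ n ∈ Finset.Icc 1 N,
        b n * χ (n : ZMod d) * (n : ℂ) ^ (-(1 / 2 : ℂ) - Complex.I * t)‖ ^ 4) / (t ^ 2 + 1))
      ≤ ∫ t : ℝ, B * (1 + t^2)⁻¹ := by
    refine integral_mono_of_nonneg (Filter.Eventually.of_forall fun t => ?_) hint
      (Filter.Eventually.of_forall fun t => ?_)
    · exact div_nonneg (sumPrimitive_nonneg _ fun χ => by positivity) (by positivity)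
    · have h1 : (0:ℝ) < t^2 + 1 := by positivity
      calc sumPrimitive d (fun χ =>
          ‖∑ n ∈ Finset.Icc 1 N,
            b n * χ (n : ZMod d) * (n : ℂ) ^ (-(1 / 2 : ℂ) - Complex.I * t)‖ ^ 4) / (t ^ 2 + 1)
          ≤ B / (t^2 + 1) := by
            exact div_le_div_of_nonneg_right (hptb t) h1.le
        _ = B * (1 + t^2)⁻¹ := by rw [div_eq_mul_inv, add_comm]
  have hval : (∫ t : ℝ, B * (1 + t^2)⁻¹) = B * π := by
    rw [MeasureTheory.integral_const_mul, integral_univ_inv_one_add_sq]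
  refine hmono.trans ?_
  rw [hval]
  have hpi : B * π ≤ B * 4 := mul_le_mul_of_nonneg_left Real.pi_le_four hBnn
  refine hpi.trans ?_
  rw [hB]
  ring_nf
  nlinarith [sq_nonneg X, hlogX, pow_pos hlogX 4, Nat.cast_nonneg (α := ℝ) d]
end

section
/- Let ε > 0 be fixed. There exists N₀ = N₀(ε) such that for every real N ≥ N₀ and all reals N_1, …, N_40 ≥ 1/2 with N_1 ⋯ N_40 ≤ N^{15/8−ε}, at least one of the following holds: (a) there exists a set I ⊆ {1,…,40} such that N^{3/4+ε/100} < Π_{j∈I} N_j ≤ N^{9/8−ε/100}; (b) there exist two distinct indices j₁, j₂ ∈ {1,…,40} such that Π_{j∈{1,…,40}∖{j₁,j₂}} N_j ≤ N^{9/8−ε/100}. -/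
open Real Finset

/-- Splitting lemma for the dyadic ranges: if `N₁ ⋯ N₄₀ ≤ N^{15/8-ε}`, then either there is a
balanced sub-product `I` with `N^{3/4+ε/100} < Π_{j∈I} N_j ≤ N^{9/8-ε/100}`, or all but two of the
factors have product at most `N^{9/8-ε/100}`. -/
theorem splitting_lemma (ε : ℝ) (hε : 0 < ε) :
    ∃ N₀ : ℝ, ∀ N : ℝ, N₀ ≤ N → ∀ Nf : Fin 40 → ℝ, (∀ j, 1 / 2 ≤ Nf j) →
      (∏ j, Nf j) ≤ N ^ (15 / 8 - ε : ℝ) →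
      (∃ I : Finset (Fin 40),
          N ^ (3 / 4 + ε / 100 : ℝ) < ∏ j ∈ I, Nf j ∧
          (∏ j ∈ I, Nf j) ≤ N ^ (9 / 8 - ε / 100 : ℝ)) ∨
      (∃ j₁ j₂ : Fin 40, j₁ ≠ j₂ ∧
          (∏ j ∈ (univ.erase j₁).erase j₂, Nf j) ≤ N ^ (9 / 8 - ε / 100 : ℝ)) := by
  classical
  refine ⟨(2 : ℝ) ^ (400 : ℕ), fun N hN Nf hNf htot => ?_⟩
  have hN1 : (1 : ℝ) ≤ N := le_trans (one_le_pow₀ (by norm_num)) hN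
  have hN0 : (0 : ℝ) < N := lt_of_lt_of_le one_pos hN1
  have hpos : ∀ j, (0 : ℝ) < Nf j := fun j => lt_of_lt_of_le (by norm_num) (hNf j)
  -- a helper: N ^ c ≥ 2 ^ 50 whenever c ≥ 1/8
  have hkey : ∀ c : ℝ, 1 / 8 ≤ c → (2 : ℝ) ^ (50 : ℕ) ≤ N ^ c := by
    intro c hc
    have h1 : N ^ (1 / 8 : ℝ) ≤ N ^ c := Real.rpow_le_rpow_of_exponent_le hN1 hc
    have h2 : ((2 : ℝ) ^ (400 : ℕ)) ^ (1 / 8 : ℝ) ≤ N ^ (1 / 8 : ℝ) :=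
      Real.rpow_le_rpow (by positivity) hN (by norm_num)
    have h3 : ((2 : ℝ) ^ (400 : ℕ)) ^ (1 / 8 : ℝ) = (2 : ℝ) ^ (50 : ℕ) := by
      rw [← Real.rpow_natCast (2 : ℝ) 400, ← Real.rpow_mul (by norm_num),
        ← Real.rpow_natCast (2 : ℝ) 50]
      norm_num
    linarith
  have h2pow : (4 : ℝ) ≤ (2 : ℝ) ^ (50 : ℕ) := by norm_num
  by_cases hε2 : 2 ≤ ε
  · -- vacuous case: product is at least 2⁻⁴⁰ but the bound is below that
    exfalso
    have hlb : ((1 : ℝ) / 2) ^ (40 : ℕ) ≤ ∏ j, Nf j := by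
      calc ((1 : ℝ) / 2) ^ (40 : ℕ) = ∏ _j : Fin 40, (1 / 2 : ℝ) := by
            rw [Finset.prod_const, Finset.card_univ, Fintype.card_fin]
        _ ≤ ∏ j, Nf j := Finset.prod_le_prod (fun _ _ => by norm_num) (fun j _ => hNf j)
    have h1 : N ^ (15 / 8 - ε : ℝ) ≤ N ^ (-(1 / 8) : ℝ) :=
      Real.rpow_le_rpow_of_exponent_le hN1 (by linarith)
    have h2 : N ^ (-(1 / 8) : ℝ) = (N ^ (1 / 8 : ℝ))⁻¹ := by
      rw [Real.rpow_neg hN0.le]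
    have h3 : (2 : ℝ) ^ (50 : ℕ) ≤ N ^ (1 / 8 : ℝ) := hkey _ le_rfl
    have h4 : (N ^ (1 / 8 : ℝ))⁻¹ ≤ ((2 : ℝ) ^ (50 : ℕ))⁻¹ :=
      inv_anti₀ (by positivity) h3
    have : ((1 : ℝ) / 2) ^ (40 : ℕ) ≤ ((2 : ℝ) ^ (50 : ℕ))⁻¹ := by
      calc ((1 : ℝ) / 2) ^ (40 : ℕ) ≤ ∏ j, Nf j := hlb
        _ ≤ N ^ (15 / 8 - ε : ℝ) := htot
        _ ≤ N ^ (-(1 / 8) : ℝ) := h1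
        _ = (N ^ (1 / 8 : ℝ))⁻¹ := h2
        _ ≤ ((2 : ℝ) ^ (50 : ℕ))⁻¹ := h4
    norm_num at this
  push_neg at hε2
  set α : ℝ := 3 / 4 + ε / 100 with hα
  set β : ℝ := 9 / 8 - ε / 100 with hβ
  set γ : ℝ := 3 / 8 - ε / 50 with hγ
  have hαβγ : γ + α = β := by rw [hα, hβ, hγ]; ring
  have hNβpos : (0 : ℝ) < N ^ β := Real.rpow_pos_of_pos hN0 _
  have hNγpos : (0 : ℝ) < N ^ γ := Real.rpow_pos_of_pos hN0 _
  have hNαpos : (0 : ℝ) < N ^ α := Real.rpow_pos_of_pos hN0 _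
  have hNα1 : (1 : ℝ) ≤ N ^ α :=
    Real.one_le_rpow hN1 (by rw [hα]; linarith)
  by_cases hA : ∃ j₁ j₂ : Fin 40, j₁ ≠ j₂ ∧ N ^ γ < Nf j₁ ∧ N ^ γ < Nf j₂
  · -- two big factors: remove both
    obtain ⟨j₁, j₂, hne, h1, h2⟩ := hA
    right
    refine ⟨j₁, j₂, hne, ?_⟩
    set R := ∏ j ∈ (univ.erase j₁).erase j₂, Nf j with hR
    have hRpos : 0 < R := Finset.prod_pos (fun j _ => hpos j)
    have e1 : Nf j₁ * (Nf j₂ * R) = ∏ j, Nf j := by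
      rw [hR, Finset.mul_prod_erase (univ.erase j₁) Nf
        (Finset.mem_erase.mpr ⟨hne.symm, Finset.mem_univ _⟩),
        Finset.mul_prod_erase univ Nf (Finset.mem_univ j₁)]
    have hexp : N ^ (15 / 8 - ε : ℝ) ≤ N ^ (γ + γ + β) :=
      Real.rpow_le_rpow_of_exponent_le hN1 (by rw [hβ, hγ]; linarith)
    have hsplit : N ^ (γ + γ + β : ℝ) = N ^ γ * N ^ γ * N ^ β := by
      rw [Real.rpow_add hN0, Real.rpow_add hN0]
    have hmul : N ^ γ * N ^ γ ≤ Nf j₁ * Nf j₂ :=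
      mul_le_mul h1.le h2.le hNγpos.le (le_trans hNγpos.le h1.le)
    have hchain : N ^ γ * N ^ γ * R ≤ N ^ γ * N ^ γ * N ^ β := by
      calc N ^ γ * N ^ γ * R ≤ Nf j₁ * Nf j₂ * R :=
            mul_le_mul_of_nonneg_right hmul hRpos.le
        _ = Nf j₁ * (Nf j₂ * R) := by ring
        _ = ∏ j, Nf j := e1
        _ ≤ N ^ (15 / 8 - ε : ℝ) := htot
        _ ≤ N ^ (γ + γ + β) := hexp
        _ = N ^ γ * N ^ γ * N ^ β := hsplit
    exact le_of_mul_le_mul_left hchain (by positivity)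
  · push_neg at hA
    by_cases hbig : ∃ j : Fin 40, N ^ β < Nf j
    · -- one huge factor: remove it together with any other index
      obtain ⟨j₁, hj₁⟩ := hbig
      right
      by_cases h0 : j₁ = 0
      case pos =>
        refine ⟨j₁, 1, by rw [h0]; decide, ?_⟩
        set j₂ : Fin 40 := 1 with hj₂def
        have hne : j₁ ≠ j₂ := by rw [h0]; decide
        set R := ∏ j ∈ (univ.erase j₁).erase j₂, Nf j with hR
        have hRpos : 0 < R := Finset.prod_pos (fun j _ => hpos j)
        have e1 : Nf j₁ * (Nf j₂ * R) = ∏ j, Nf j := by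
          rw [hR, Finset.mul_prod_erase (univ.erase j₁) Nf
            (Finset.mem_erase.mpr ⟨(Ne.symm hne), Finset.mem_univ _⟩),
            Finset.mul_prod_erase univ Nf (Finset.mem_univ j₁)]
        have h2le : (2 : ℝ) ≤ N ^ (3 / 8 : ℝ) :=
          le_trans (by norm_num) (hkey (3 / 8 : ℝ) (by norm_num))
        have hexp : N ^ (15 / 8 - ε : ℝ) * N ^ (3 / 8 : ℝ) ≤ N ^ (β + β) := by
          rw [← Real.rpow_add hN0]
          exact Real.rpow_le_rpow_of_exponent_le hN1 (by rw [hβ]; linarith)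
        have hprodpos : (0 : ℝ) < N ^ (15 / 8 - ε : ℝ) := Real.rpow_pos_of_pos hN0 _
        have h2 : 2 * N ^ (15 / 8 - ε : ℝ) ≤ N ^ β * N ^ β := by
          calc 2 * N ^ (15 / 8 - ε : ℝ) = N ^ (15 / 8 - ε : ℝ) * 2 := by ring
            _ ≤ N ^ (15 / 8 - ε : ℝ) * N ^ (3 / 8 : ℝ) :=
                mul_le_mul_of_nonneg_left h2le hprodpos.le
            _ ≤ N ^ (β + β) := hexp
            _ = N ^ β * N ^ β := Real.rpow_add hN0 _ _
        have hNf2 : (1 : ℝ) / 2 ≤ Nf j₂ := hNf j₂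
        have hmul : N ^ β * (1 / 2) ≤ Nf j₁ * Nf j₂ :=
          mul_le_mul hj₁.le hNf2 (by norm_num) (le_trans hNβpos.le hj₁.le)
        have hchain : N ^ β * (1 / 2) * R ≤ N ^ β * (1 / 2) * N ^ β := by
          calc N ^ β * (1 / 2) * R ≤ Nf j₁ * Nf j₂ * R :=
                mul_le_mul_of_nonneg_right hmul hRpos.le
            _ = Nf j₁ * (Nf j₂ * R) := by ring
            _ = ∏ j, Nf j := e1
            _ ≤ N ^ (15 / 8 - ε : ℝ) := htot
            _ ≤ N ^ β * (1 / 2) * N ^ β := by nlinarith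
        exact le_of_mul_le_mul_left hchain (by positivity)
      case neg =>
        refine ⟨j₁, 0, h0, ?_⟩
        set j₂ : Fin 40 := 0 with hj₂def
        have hne : j₁ ≠ j₂ := h0
        set R := ∏ j ∈ (univ.erase j₁).erase j₂, Nf j with hR
        have hRpos : 0 < R := Finset.prod_pos (fun j _ => hpos j)
        have e1 : Nf j₁ * (Nf j₂ * R) = ∏ j, Nf j := by
          rw [hR, Finset.mul_prod_erase (univ.erase j₁) Nf
            (Finset.mem_erase.mpr ⟨(Ne.symm hne), Finset.mem_univ _⟩),
            Finset.mul_prod_erase univ Nf (Finset.mem_univ j₁)]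
        have h2le : (2 : ℝ) ≤ N ^ (3 / 8 : ℝ) :=
          le_trans (by norm_num) (hkey (3 / 8 : ℝ) (by norm_num))
        have hexp : N ^ (15 / 8 - ε : ℝ) * N ^ (3 / 8 : ℝ) ≤ N ^ (β + β) := by
          rw [← Real.rpow_add hN0]
          exact Real.rpow_le_rpow_of_exponent_le hN1 (by rw [hβ]; linarith)
        have hprodpos : (0 : ℝ) < N ^ (15 / 8 - ε : ℝ) := Real.rpow_pos_of_pos hN0 _
        have h2 : 2 * N ^ (15 / 8 - ε : ℝ) ≤ N ^ β * N ^ β := by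
          calc 2 * N ^ (15 / 8 - ε : ℝ) = N ^ (15 / 8 - ε : ℝ) * 2 := by ring
            _ ≤ N ^ (15 / 8 - ε : ℝ) * N ^ (3 / 8 : ℝ) :=
                mul_le_mul_of_nonneg_left h2le hprodpos.le
            _ ≤ N ^ (β + β) := hexp
            _ = N ^ β * N ^ β := Real.rpow_add hN0 _ _
        have hNf2 : (1 : ℝ) / 2 ≤ Nf j₂ := hNf j₂
        have hmul : N ^ β * (1 / 2) ≤ Nf j₁ * Nf j₂ :=
          mul_le_mul hj₁.le hNf2 (by norm_num) (le_trans hNβpos.le hj₁.le)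
        have hchain : N ^ β * (1 / 2) * R ≤ N ^ β * (1 / 2) * N ^ β := by
          calc N ^ β * (1 / 2) * R ≤ Nf j₁ * Nf j₂ * R :=
                mul_le_mul_of_nonneg_right hmul hRpos.le
            _ = Nf j₁ * (Nf j₂ * R) := by ring
            _ = ∏ j, Nf j := e1
            _ ≤ N ^ (15 / 8 - ε : ℝ) := htot
            _ ≤ N ^ β * (1 / 2) * N ^ β := by nlinarith
        exact le_of_mul_le_mul_left hchain (by positivity)
    · push_neg at hbig
      by_cases htotα : N ^ α < ∏ j, Nf j
      · -- find a minimal subset with product > N^α, by induction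
        left
        have hmin : ∀ n : ℕ, ∀ S : Finset (Fin 40), S.card ≤ n →
            N ^ α < ∏ j ∈ S, Nf j →
            ∃ T : Finset (Fin 40), (N ^ α < ∏ j ∈ T, Nf j) ∧
              ∀ j ∈ T, ∏ i ∈ T.erase j, Nf i ≤ N ^ α := by
          intro n
          induction n with
          | zero =>
            intro S hcard hprod
            exfalso
            have : S = ∅ := Finset.card_eq_zero.mp (Nat.le_zero.mp hcard)
            rw [this, Finset.prod_empty] at hprod
            linarith
          | succ n ih =>
            intro S hcard hprod
            by_cases hall : ∀ j ∈ S, ∏ i ∈ S.erase j, Nf i ≤ N ^ α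
            · exact ⟨S, hprod, hall⟩
            · push_neg at hall
              obtain ⟨j, hjS, hjprod⟩ := hall
              have hlt : (S.erase j).card ≤ n := by
                have := Finset.card_erase_lt_of_mem hjS
                omega
              exact ih (S.erase j) hlt hjprod
        obtain ⟨T, hTprod, hTmin⟩ := hmin 40 Finset.univ (by simp) htotα
        have hTne : T.Nonempty := by
          rcases T.eq_empty_or_nonempty with h | h
          · exfalso; rw [h, Finset.prod_empty] at hTprod; linarith
          · exact h
        by_cases hsmall : ∃ j ∈ T, Nf j ≤ N ^ γ
        · obtain ⟨j, hjT, hjγ⟩ := hsmall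
          refine ⟨T, hTprod, ?_⟩
          have hepos : (0 : ℝ) ≤ ∏ i ∈ T.erase j, Nf i :=
            (Finset.prod_pos (fun i _ => hpos i)).le
          calc ∏ i ∈ T, Nf i = Nf j * ∏ i ∈ T.erase j, Nf i :=
                (Finset.mul_prod_erase T Nf hjT).symm
            _ ≤ N ^ γ * N ^ α :=
                mul_le_mul hjγ (hTmin j hjT) hepos hNγpos.le
            _ = N ^ β := by rw [← Real.rpow_add hN0, hαβγ]
        · push_neg at hsmall
          obtain ⟨j, hjT⟩ := hTne
          have hTsub : T = {j} := by
            apply Finset.eq_singleton_iff_unique_mem.mpr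
            refine ⟨hjT, fun j' hj'T => ?_⟩
            by_contra hnej
            exact absurd (hA j' j hnej (hsmall j' hj'T)) (not_le.mpr (hsmall j hjT))
          refine ⟨T, hTprod, ?_⟩
          rw [hTsub, Finset.prod_singleton]
          exact hbig j
      · -- total small: remove indices 0 and 1
        push_neg at htotα
        right
        refine ⟨0, 1, by decide, ?_⟩
        set R := ∏ j ∈ (univ.erase (0 : Fin 40)).erase 1, Nf j with hR
        have hRpos : 0 < R := Finset.prod_pos (fun j _ => hpos j)
        have e1 : Nf 0 * (Nf 1 * R) = ∏ j, Nf j := by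
          rw [hR, Finset.mul_prod_erase (univ.erase (0 : Fin 40)) Nf
            (Finset.mem_erase.mpr ⟨by decide, Finset.mem_univ _⟩),
            Finset.mul_prod_erase univ Nf (Finset.mem_univ (0 : Fin 40))]
        have h4le : (4 : ℝ) ≤ N ^ γ :=
          le_trans h2pow (hkey γ (by rw [hγ]; linarith))
        have hNf0 : (1 : ℝ) / 2 ≤ Nf 0 := hNf 0
        have hNf1 : (1 : ℝ) / 2 ≤ Nf 1 := hNf 1
        have hmul : (1 / 2 : ℝ) * (1 / 2) ≤ Nf 0 * Nf 1 :=
          mul_le_mul hNf0 hNf1 (by norm_num) (hpos 0).le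
        have hγα : N ^ γ * N ^ α = N ^ β := by rw [← Real.rpow_add hN0, hαβγ]
        have hchain : (1 / 4 : ℝ) * R ≤ (1 / 4 : ℝ) * N ^ β := by
          calc (1 / 4 : ℝ) * R = (1 / 2 : ℝ) * (1 / 2) * R := by ring
            _ ≤ Nf 0 * Nf 1 * R := mul_le_mul_of_nonneg_right hmul hRpos.le
            _ = Nf 0 * (Nf 1 * R) := by ring
            _ = ∏ j, Nf j := e1
            _ ≤ N ^ α := htotα
            _ ≤ (1 / 4 : ℝ) * N ^ β := by nlinarith
        linarith
end

section
/- Let ε > 0 be fixed, let k ≥ 2 be an even integer, and set Θ_k := 2 − 1/(5k−2). There exists N₀ = N₀(ε,k) such that for every real N ≥ N₀ and all reals N_1, …, N_40 ≥ 1/2 with N_1 ⋯ N_40 ≤ N^{Θ_k−ε}, at least one of the following holds: (a) there exists a set I ⊆ {1,…,40} such that N^{kΘ_k−2k+1+ε/100} < Π_{j∈I} N_j ≤ N^{Θ_k}/N^{kΘ_k−2k+1+ε/100}; (b) there exist two distinct indices j₁, j₂ ∈ {1,…,40} such that Π_{j∈{1,…,40}∖{j₁,j₂}} N_j ≤ N^{kΘ_k−2k+1+ε/100}.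 -/
open Real Finset

lemma prod_mono_of_one_le_aux {s t : Finset (Fin 40)} {f : Fin 40 → ℝ} (hst : s ⊆ t)
    (h0 : ∀ i ∈ s, (0:ℝ) ≤ f i) (h1 : ∀ i ∈ t, i ∉ s → 1 ≤ f i) :
    (∏ i ∈ s, f i) ≤ ∏ i ∈ t, f i := by
  rw [← Finset.prod_sdiff hst]
  have hone : (1:ℝ) ≤ ∏ i ∈ t \ s, f i := by
    have := Finset.prod_le_prod (f := fun _ => (1:ℝ)) (g := f)
      (fun i _ => by norm_num)
      (fun i hi => h1 i (Finset.mem_sdiff.mp hi).1 (Finset.mem_sdiff.mp hi).2)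
    simpa using this
  exact le_mul_of_one_le_left (Finset.prod_nonneg h0) hone


/-- Splitting lemma for the dyadic ranges, general weight `k`: with `Θ_k = 2 - 1/(5k-2)`, if
`N₁ ⋯ N₄₀ ≤ N^{Θ_k-ε}` then either there is a sub-product `I` with
`N^{kΘ_k-2k+1+ε/100} < Π_{j∈I} N_j ≤ N^{Θ_k}/N^{kΘ_k-2k+1+ε/100}`, or all but two of the
factors have product at most `N^{kΘ_k-2k+1+ε/100}`. -/
theorem splitting_lemma_general (ε : ℝ) (hε : 0 < ε) (k : ℕ) (hk2 : 2 ≤ k) (hkeven : Even k) :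
    ∃ N₀ : ℝ, ∀ N : ℝ, N₀ ≤ N → ∀ Nf : Fin 40 → ℝ, (∀ j, 1 / 2 ≤ Nf j) →
      (∏ j, Nf j) ≤ N ^ ((2 - 1 / (5 * (k : ℝ) - 2)) - ε) →
      (∃ I : Finset (Fin 40),
          N ^ ((k : ℝ) * (2 - 1 / (5 * (k : ℝ) - 2)) - 2 * k + 1 + ε / 100) < ∏ j ∈ I, Nf j ∧
          (∏ j ∈ I, Nf j) ≤ N ^ (2 - 1 / (5 * (k : ℝ) - 2)) /
            N ^ ((k : ℝ) * (2 - 1 / (5 * (k : ℝ) - 2)) - 2 * k + 1 + ε / 100)) ∨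
      (∃ j₁ j₂ : Fin 40, j₁ ≠ j₂ ∧
          (∏ j ∈ (univ.erase j₁).erase j₂, Nf j) ≤
            N ^ ((k : ℝ) * (2 - 1 / (5 * (k : ℝ) - 2)) - 2 * k + 1 + ε / 100)) := by
  refine ⟨2 ^ (1000 * (1 + 1/ε)), ?_⟩
  intro N hN Nf hNf hprod
  have hk : (2:ℝ) ≤ (k:ℝ) := by exact_mod_cast hk2
  have hcpos : (0:ℝ) < 5 * (k:ℝ) - 2 := by linarith
  have hcne : (5 * (k:ℝ) - 2) ≠ 0 := ne_of_gt hcpos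
  set Θ : ℝ := 2 - 1 / (5 * (k : ℝ) - 2) with hΘdef
  set α : ℝ := (k : ℝ) * Θ - 2 * (k:ℝ) + 1 + ε / 100 with hαdef
  have hαlb : 3/4 + ε/100 ≤ α := by
    have h2 : (k:ℝ) / (5*(k:ℝ)-2) ≤ 1/4 := by
      rw [div_le_div_iff₀ hcpos (by norm_num : (0:ℝ) < 4)]; linarith
    have h3 : α = 1 - (k:ℝ)/(5*(k:ℝ)-2) + ε/100 := by
      rw [hαdef, hΘdef]; field_simp; ring
    linarith
  have hαpos : 0 < α := lt_of_lt_of_le (by linarith : (0:ℝ) < 3/4 + ε/100) hαlb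
  have h5α : 5 * α = 2 * Θ + ε / 20 := by
    rw [hαdef, hΘdef]; field_simp; ring
  clear_value Θ α
  have hN1 : (1:ℝ) ≤ N := by
    have h0 : (2:ℝ) ^ (0:ℝ) ≤ 2 ^ (1000*(1+1/ε)) :=
      Real.rpow_le_rpow_of_exponent_le one_le_two (by positivity)
    have := h0.trans hN
    simpa [Real.rpow_zero] using this
  have hN0 : (0:ℝ) < N := lt_of_lt_of_le one_pos hN1
  have hNfpos : ∀ j, (0:ℝ) < Nf j := fun j => lt_of_lt_of_le (by norm_num) (hNf j)
  have hA1 : (1:ℝ) ≤ N ^ α := by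
    have := Real.rpow_le_rpow_of_exponent_le hN1 (le_of_lt hαpos)
    simpa [Real.rpow_zero] using this
  have hApos : (0:ℝ) < N ^ α := Real.rpow_pos_of_pos hN0 α
  rw [or_iff_not_imp_left]
  intro ha
  push_neg at ha
  classical
  set Pos : Finset (Fin 40) := univ.filter (fun j => 1 ≤ Nf j) with hPosdef
  have hPos1 : ∀ j ∈ Pos, 1 ≤ Nf j := fun j hj => (mem_filter.mp hj).2
  obtain ⟨S, hSmem, hSmax⟩ : ∃ S ∈ Pos.powerset.filter (fun T => (∏ j ∈ T, Nf j) ≤ N ^ α),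
      ∀ x ∈ Pos.powerset.filter (fun T => (∏ j ∈ T, Nf j) ≤ N ^ α), ¬ S < x := by
    obtain ⟨S, hS⟩ := Finset.exists_maximal
      (s := Pos.powerset.filter (fun T => (∏ j ∈ T, Nf j) ≤ N ^ α))
      ⟨∅, by simp [hA1]⟩
    exact ⟨S, hS.1, fun x hx hlt => hlt.not_ge (hS.2 hx hlt.le)⟩
  rw [mem_filter, mem_powerset] at hSmem
  obtain ⟨hSPos, hSA⟩ := hSmem
  have hins : ∀ x ∈ Pos, x ∉ S → N ^ Θ / N ^ α < ∏ j ∈ insert x S, Nf j := by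
    intro x hx hxS
    have hsub : insert x S ⊆ Pos := Finset.insert_subset_iff.mpr ⟨hx, hSPos⟩
    have hgt : N ^ α < ∏ j ∈ insert x S, Nf j := by
      by_contra hle
      push_neg at hle
      exact hSmax _ (mem_filter.mpr ⟨mem_powerset.mpr hsub, hle⟩) (Finset.ssubset_insert hxS)
    exact ha _ hgt
  have hcard : (Pos \ S).card ≤ 2 := by
    by_contra hcard
    push_neg at hcard
    obtain ⟨t, htsub, htc⟩ := Finset.exists_subset_card_eq (s := Pos \ S) (n := 3) hcard
    obtain ⟨x, y, z, hxy, hxz, hyz, rfl⟩ := Finset.card_eq_three.mp htc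
    have hx := htsub (by simp : x ∈ ({x, y, z} : Finset (Fin 40)))
    have hy := htsub (by simp : y ∈ ({x, y, z} : Finset (Fin 40)))
    have hz := htsub (by simp : z ∈ ({x, y, z} : Finset (Fin 40)))
    rw [mem_sdiff] at hx hy hz
    set PS := ∏ j ∈ S, Nf j with hPSdef
    have hPSpos : (0:ℝ) < PS := Finset.prod_pos (fun j _ => hNfpos j)
    have hBpos : (0:ℝ) < N ^ Θ / N ^ α := by positivity
    have hBApos : (0:ℝ) ≤ (N ^ Θ / N ^ α) / N ^ α := by positivity
    have hxB : N ^ Θ / N ^ α < Nf x * PS := by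
      have h1 := hins x hx.1 hx.2
      rwa [Finset.prod_insert hx.2] at h1
    have hyB : (N ^ Θ / N ^ α) / N ^ α < Nf y := by
      have h1 := hins y hy.1 hy.2
      rw [Finset.prod_insert hy.2] at h1
      rw [div_lt_iff₀ hApos]
      calc N ^ Θ / N ^ α < Nf y * PS := h1
        _ ≤ Nf y * N ^ α := mul_le_mul_of_nonneg_left hSA (le_of_lt (hNfpos y))
    have hzB : (N ^ Θ / N ^ α) / N ^ α < Nf z := by
      have h1 := hins z hz.1 hz.2
      rw [Finset.prod_insert hz.2] at h1
      rw [div_lt_iff₀ hApos]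
      calc N ^ Θ / N ^ α < Nf z * PS := h1
        _ ≤ Nf z * N ^ α := mul_le_mul_of_nonneg_left hSA (le_of_lt (hNfpos z))
    have hUval : ∏ j ∈ insert x (insert y (insert z S)), Nf j
        = (Nf x * PS) * (Nf y * Nf z) := by
      rw [Finset.prod_insert (by simp [hxy, hxz, hx.2]),
        Finset.prod_insert (by simp [hyz, hy.2]),
        Finset.prod_insert hz.2]
      ring
    have hUlow : (N ^ Θ / N ^ α) * ((N ^ Θ / N ^ α / N ^ α) * (N ^ Θ / N ^ α / N ^ α))
        < (Nf x * PS) * (Nf y * Nf z) :=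
      mul_lt_mul'' hxB (mul_lt_mul'' hyB hzB hBApos hBApos) (le_of_lt hBpos)
        (by positivity)
    have hUsub : insert x (insert y (insert z S)) ⊆ Pos :=
      Finset.insert_subset_iff.mpr ⟨hx.1, Finset.insert_subset_iff.mpr ⟨hy.1,
        Finset.insert_subset_iff.mpr ⟨hz.1, hSPos⟩⟩⟩
    have hUPos : (∏ j ∈ insert x (insert y (insert z S)), Nf j) ≤ ∏ j ∈ Pos, Nf j :=
      prod_mono_of_one_le_aux hUsub (fun i _ => (hNfpos i).le) (fun i hi _ => hPos1 i hi)
    -- bound the product over Pos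
    have hsplit : (∏ j ∈ Pos, Nf j) * (∏ j ∈ univ.filter (fun j => ¬ 1 ≤ Nf j), Nf j)
        = ∏ j, Nf j := Finset.prod_filter_mul_prod_filter_not univ _ _
    have hQlb : ((1:ℝ)/2) ^ (40:ℕ) ≤ ∏ j ∈ univ.filter (fun j => ¬ 1 ≤ Nf j), Nf j := by
      have hcle : (univ.filter (fun j => ¬ 1 ≤ Nf j)).card ≤ 40 := by
        calc (univ.filter (fun j => ¬ 1 ≤ Nf j)).card ≤ (univ : Finset (Fin 40)).card :=
              Finset.card_filter_le _ _
          _ = 40 := by simp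
      calc ((1:ℝ)/2) ^ (40:ℕ)
          ≤ ((1:ℝ)/2) ^ (univ.filter (fun j => ¬ 1 ≤ Nf j)).card :=
            pow_le_pow_of_le_one (by norm_num) (by norm_num) hcle
        _ = ∏ _j ∈ univ.filter (fun j => ¬ 1 ≤ Nf j), ((1:ℝ)/2) :=
            (Finset.prod_const _).symm
        _ ≤ ∏ j ∈ univ.filter (fun j => ¬ 1 ≤ Nf j), Nf j :=
            Finset.prod_le_prod (fun i _ => by norm_num) (fun i _ => hNf i)
    have hPosnn : (0:ℝ) ≤ ∏ j ∈ Pos, Nf j :=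
      Finset.prod_nonneg (fun j _ => (hNfpos j).le)
    have hPosub : (∏ j ∈ Pos, Nf j) ≤ 2 ^ (40:ℕ) * N ^ (Θ - ε) := by
      have h1 : (∏ j ∈ Pos, Nf j) * ((1:ℝ)/2) ^ (40:ℕ) ≤ N ^ (Θ - ε) := by
        calc (∏ j ∈ Pos, Nf j) * ((1:ℝ)/2) ^ (40:ℕ)
            ≤ (∏ j ∈ Pos, Nf j) * (∏ j ∈ univ.filter (fun j => ¬ 1 ≤ Nf j), Nf j) :=
              mul_le_mul_of_nonneg_left hQlb hPosnn
          _ = ∏ j, Nf j := hsplit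
          _ ≤ N ^ (Θ - ε) := hprod
      have hconst : ((1:ℝ)/2) ^ (40:ℕ) * 2 ^ (40:ℕ) = 1 := by
        rw [← mul_pow]; norm_num
      have h2 := mul_le_mul_of_nonneg_right h1 (by positivity : (0:ℝ) ≤ 2 ^ (40:ℕ))
      calc ∏ j ∈ Pos, Nf j
          = (∏ j ∈ Pos, Nf j) * ((1:ℝ)/2) ^ (40:ℕ) * 2 ^ (40:ℕ) := by
            rw [mul_assoc, hconst, mul_one]
        _ ≤ N ^ (Θ - ε) * 2 ^ (40:ℕ) := h2
        _ = 2 ^ (40:ℕ) * N ^ (Θ - ε) := mul_comm _ _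
    -- rpow computation
    have hBBB : (N ^ Θ / N ^ α) * ((N ^ Θ / N ^ α / N ^ α) * (N ^ Θ / N ^ α / N ^ α))
        = N ^ (3*Θ - 5*α) := by
      rw [← Real.rpow_sub hN0, ← Real.rpow_sub hN0, ← Real.rpow_add hN0,
        ← Real.rpow_add hN0]
      congr 1; ring
    have hexp : 3*Θ - 5*α = (Θ - ε) + (19/20 * ε) := by linarith
    have hNε : (2:ℝ) ^ (950:ℝ) ≤ N ^ (19/20 * ε) := by
      have h1 : ((2:ℝ) ^ (1000*(1+1/ε))) ^ (19/20*ε) ≤ N ^ (19/20*ε) :=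
        Real.rpow_le_rpow (Real.rpow_nonneg (by norm_num) _) hN (by positivity)
      have h2 : ((2:ℝ) ^ (1000*(1+1/ε))) ^ (19/20*ε)
          = (2:ℝ) ^ ((1000*(1+1/ε)) * (19/20*ε)) :=
        (Real.rpow_mul (by norm_num) _ _).symm
      have h3 : (1000*(1+1/ε)) * (19/20*ε) = 950 * ε + 950 := by
        field_simp; ring
      have h4 : (2:ℝ) ^ (950:ℝ) ≤ (2:ℝ) ^ (950*ε+950) :=
        Real.rpow_le_rpow_of_exponent_le one_le_two (by nlinarith)
      rw [h2, h3] at h1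
      linarith
    have hXpos : (0:ℝ) < N ^ (Θ - ε) := Real.rpow_pos_of_pos hN0 _
    have hfin : (2:ℝ) ^ (950:ℝ) * N ^ (Θ-ε) ≤ N ^ (3*Θ-5*α) := by
      rw [hexp, Real.rpow_add hN0]
      have := mul_le_mul_of_nonneg_left hNε (le_of_lt hXpos)
      linarith
    have hchain : (2:ℝ) ^ (950:ℝ) * N ^ (Θ-ε) < 2 ^ (40:ℕ) * N ^ (Θ-ε) := by
      calc (2:ℝ) ^ (950:ℝ) * N ^ (Θ-ε) ≤ N ^ (3*Θ-5*α) := hfin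
        _ = (N ^ Θ / N ^ α) * ((N ^ Θ / N ^ α / N ^ α) * (N ^ Θ / N ^ α / N ^ α)) :=
            hBBB.symm
        _ < (Nf x * PS) * (Nf y * Nf z) := hUlow
        _ = ∏ j ∈ insert x (insert y (insert z S)), Nf j := hUval.symm
        _ ≤ ∏ j ∈ Pos, Nf j := hUPos
        _ ≤ 2 ^ (40:ℕ) * N ^ (Θ-ε) := hPosub
    have h40 : ((2:ℝ) ^ (40:ℕ)) ≤ (2:ℝ) ^ (950:ℝ) := by
      rw [← Real.rpow_natCast 2 40]
      exact Real.rpow_le_rpow_of_exponent_le one_le_two (by norm_num)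
    have := mul_le_mul_of_nonneg_right h40 hXpos.le
    exact lt_irrefl _ (lt_of_lt_of_le hchain this)
  -- extraction of the two exceptional indices
  have hkey : ∀ j₁ j₂ : Fin 40, Pos \ S ⊆ {j₁, j₂} →
      (∏ j ∈ (univ.erase j₁).erase j₂, Nf j) ≤ N ^ α := by
    intro j₁ j₂ hsub
    have hsplitE : (∏ j ∈ ((univ.erase j₁).erase j₂).filter (fun j => 1 ≤ Nf j), Nf j) *
        (∏ j ∈ ((univ.erase j₁).erase j₂).filter (fun j => ¬ 1 ≤ Nf j), Nf j)
        = ∏ j ∈ (univ.erase j₁).erase j₂, Nf j :=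
      Finset.prod_filter_mul_prod_filter_not _ _ _
    have h1 : ((univ.erase j₁).erase j₂).filter (fun j => 1 ≤ Nf j) ⊆ S := by
      intro j hj
      rw [mem_filter] at hj
      have hj2 : j ≠ j₂ := (Finset.mem_erase.mp hj.1).1
      have hj1 : j ≠ j₁ := (Finset.mem_erase.mp (Finset.mem_erase.mp hj.1).2).1
      have hjPos : j ∈ Pos := mem_filter.mpr ⟨mem_univ j, hj.2⟩
      by_contra hjS
      have hmem : j ∈ Pos \ S := mem_sdiff.mpr ⟨hjPos, hjS⟩
      have := hsub hmem
      rcases Finset.mem_insert.mp this with h | h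
      · exact hj1 h
      · exact hj2 (Finset.mem_singleton.mp h)
    have h2 : (∏ j ∈ ((univ.erase j₁).erase j₂).filter (fun j => 1 ≤ Nf j), Nf j)
        ≤ ∏ j ∈ S, Nf j :=
      prod_mono_of_one_le_aux h1 (fun i _ => (hNfpos i).le)
        (fun i hi _ => hPos1 i (hSPos hi))
    have h3 : (∏ j ∈ ((univ.erase j₁).erase j₂).filter (fun j => ¬ 1 ≤ Nf j), Nf j) ≤ 1 :=
      Finset.prod_le_one (fun i _ => (hNfpos i).le)
        (fun i hi => le_of_not_ge (mem_filter.mp hi).2)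
    calc ∏ j ∈ (univ.erase j₁).erase j₂, Nf j
        = _ * _ := hsplitE.symm
      _ ≤ (∏ j ∈ S, Nf j) * 1 := by
          apply mul_le_mul h2 h3
            (Finset.prod_nonneg (fun i _ => (hNfpos i).le))
            (Finset.prod_nonneg (fun i _ => (hNfpos i).le))
      _ = ∏ j ∈ S, Nf j := mul_one _
      _ ≤ N ^ α := hSA
  have h012 : (Pos \ S).card = 0 ∨ (Pos \ S).card = 1 ∨ (Pos \ S).card = 2 := by omega
  rcases h012 with h | h | h
  · refine ⟨0, 1, by decide, hkey 0 1 ?_⟩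
    rw [Finset.card_eq_zero.mp h]
    exact Finset.empty_subset _
  · obtain ⟨a, haeq⟩ := Finset.card_eq_one.mp h
    obtain ⟨b, hb⟩ := exists_ne a
    refine ⟨a, b, hb.symm, hkey a b ?_⟩
    rw [haeq]
    simp
  · obtain ⟨a, b, hab, habeq⟩ := Finset.card_eq_two.mp h
    exact ⟨a, b, hab, hkey a b (by rw [habeq])⟩
end
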